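/- arXiv:2007.13347 — 3 statements merged into one kernel-verified Lean document; each statement's English description precedes it below -/
import Mathlib

section
/- Let K ⊂ ℝⁿ be compact and path-connected, 𝒱 a vector space of real measurable functions on K, f : [0,1] → K a continuous surjection, and L : 𝒱 → ℝ a linear functional. Define L̃ on 𝒱 ∘ f by L̃(v ∘ f) := L(v) (well-defined since f admits a Borel right inverse). Then L is a K-moment functional if and only if L̃ is a [0,1]-moment functional. Moreover, if μ̃ represents L̃ then μ̃ ∘ f⁻¹ represents L, and there exists a Borel function g : K → [0,1] with f ∘ g = id_K such that if μ represents L then μ ∘ g⁻¹ represents L̃. -/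
open MeasureTheory

theorem stmt9 {n : ℕ} (K : Set (Fin n → ℝ)) (hK : IsCompact K) (hpc : IsPathConnected K)
    (V : Submodule ℝ (K → ℝ)) (hVmeas : ∀ v ∈ V, Measurable v)
    (f : Set.Icc (0:ℝ) 1 → K) (hf : Continuous f) (hfs : Function.Surjective f)
    (L : V →ₗ[ℝ] ℝ) :
    ∃ g : K → Set.Icc (0:ℝ) 1, Measurable g ∧ (∀ x, f (g x) = x) ∧
      ((∃ μ : Measure K, IsFiniteMeasure μ ∧
          ∀ v : V, Integrable (v : K → ℝ) μ ∧ L v = ∫ x, (v : K → ℝ) x ∂μ) ↔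
        (∃ ν : Measure (Set.Icc (0:ℝ) 1), IsFiniteMeasure ν ∧
          ∀ v : V, Integrable ((v : K → ℝ) ∘ f) ν ∧ L v = ∫ t, (v : K → ℝ) (f t) ∂ν)) ∧
      (∀ ν : Measure (Set.Icc (0:ℝ) 1), IsFiniteMeasure ν →
        (∀ v : V, Integrable ((v : K → ℝ) ∘ f) ν ∧ L v = ∫ t, (v : K → ℝ) (f t) ∂ν) →
        ∀ v : V, L v = ∫ x, (v : K → ℝ) x ∂(ν.map f)) ∧
      (∀ μ : Measure K, IsFiniteMeasure μ →
        (∀ v : V, Integrable (v : K → ℝ) μ ∧ L v = ∫ x, (v : K → ℝ) x ∂μ) →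
        ∀ v : V, L v = ∫ t, (v : K → ℝ) (f t) ∂(μ.map g)) := by
  -- fibers of f
  have hfib : ∀ x : K, ∃ t : Set.Icc (0:ℝ) 1,
      f t = x ∧ ∀ s : Set.Icc (0:ℝ) 1, f s = x → t ≤ s := by
    intro x
    have hne : {t : Set.Icc (0:ℝ) 1 | f t = x}.Nonempty := hfs x
    have hcl : IsClosed {t : Set.Icc (0:ℝ) 1 | f t = x} :=
      isClosed_eq hf continuous_const
    have hcpt : IsCompact {t : Set.Icc (0:ℝ) 1 | f t = x} :=
      hcl.isCompact
    obtain ⟨t, ht, hmin⟩ := hcpt.exists_isMinOn hne continuous_id.continuousOn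
    exact ⟨t, ht, fun s hs => hmin hs⟩
  choose g hg1 hg2 using hfib
  have hfm : Measurable f := hf.measurable
  have hgm : Measurable g := by
    apply measurable_of_Iic
    intro a
    have : g ⁻¹' Set.Iic a = f '' {t : Set.Icc (0:ℝ) 1 | t ≤ a} := by
      ext x
      constructor
      · intro hx
        exact ⟨g x, hx, hg1 x⟩
      · rintro ⟨t, ht, rfl⟩
        exact le_trans (hg2 (f t) t rfl) ht
    rw [this]
    have hcl : IsClosed {t : Set.Icc (0:ℝ) 1 | t ≤ a} := isClosed_Iic
    have : IsCompact (f '' {t : Set.Icc (0:ℝ) 1 | t ≤ a}) :=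
      (hcl.isCompact).image hf
    exact this.isClosed.measurableSet
  refine ⟨g, hgm, hg1, ?_, ?_, ?_⟩
  · constructor
    · rintro ⟨μ, hμfin, hμ⟩
      refine ⟨μ.map g, Measure.isFiniteMeasure_map μ g, fun v => ?_⟩
      have hvm : Measurable (v : K → ℝ) := hVmeas v v.2
      have hcomp : ((v : K → ℝ) ∘ f) ∘ g = (v : K → ℝ) := by
        funext x; simp [Function.comp, hg1 x]
      have hint : Integrable ((v : K → ℝ) ∘ f) (μ.map g) := by
        rw [integrable_map_measure (hvm.comp hfm).aestronglyMeasurable hgm.aemeasurable,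
          hcomp]
        exact (hμ v).1
      refine ⟨hint, ?_⟩
      show L v = ∫ t, ((v : K → ℝ) ∘ f) t ∂(μ.map g)
      rw [integral_map hgm.aemeasurable (hvm.comp hfm).aestronglyMeasurable]
      simp only [Function.comp_apply, hg1]
      exact (hμ v).2
    · rintro ⟨ν, hνfin, hν⟩
      refine ⟨ν.map f, Measure.isFiniteMeasure_map ν f, fun v => ?_⟩
      have hvm : Measurable (v : K → ℝ) := hVmeas v v.2
      have hint : Integrable (v : K → ℝ) (ν.map f) := by
        rw [integrable_map_measure hvm.aestronglyMeasurable hfm.aemeasurable]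
        exact (hν v).1
      refine ⟨hint, ?_⟩
      rw [integral_map hfm.aemeasurable hvm.aestronglyMeasurable]
      exact (hν v).2
  · intro ν _ hν v
    have hvm : Measurable (v : K → ℝ) := hVmeas v v.2
    rw [integral_map hfm.aemeasurable hvm.aestronglyMeasurable]
    exact (hν v).2
  · intro μ _ hμ v
    have hvm : Measurable (v : K → ℝ) := hVmeas v v.2
    show L v = ∫ t, ((v : K → ℝ) ∘ f) t ∂(μ.map g)
    rw [integral_map hgm.aemeasurable ((hvm.comp hfm)).aestronglyMeasurable]
    simp only [Function.comp_apply, hg1]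
    exact (hμ v).2
end

section
/- Let K ⊂ ℝⁿ be compact and path-connected, g : K → [0,1] a measurable function, f : [0,1] → K continuous surjective with f ∘ g = id_K, and let L̃ : ℝ[t] → ℝ defined by L̃(t^d) := L̄(g^d) be a [0,1]-moment functional with representing measure μ̃, where L̄ : 𝒱 + ℝ[g] → ℝ is a continuous extension of a linear functional L : 𝒱 → ℝ with 1 ∈ 𝒱 ⊆ C(K, ℝ) (continuity meaning: if polynomials p_i converge uniformly on [0,1] to p ∈ C([0,1],ℝ) with p ∘ g ∈ 𝒱 + ℝ[g], then L̄(p_i ∘ g) → L̄(p ∘ g)). Then L is a K-moment functional with representing measure μ̃ ∘ f⁻¹. -/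
open MeasureTheory Filter

private lemma tendsto_integral_of_unif {α : Type*} [MeasurableSpace α] {μ : Measure α}
    [IsFiniteMeasure μ] {F : ℕ → α → ℝ} {p : α → ℝ}
    (hF : ∀ i, Integrable (F i) μ) (hp : Integrable p μ)
    (h : TendstoUniformly F p atTop) :
    Tendsto (fun i => ∫ a, F i a ∂μ) atTop (nhds (∫ a, p a ∂μ)) := by
  rw [Metric.tendsto_atTop]
  intro ε hε
  set M : ℝ := (μ Set.univ).toReal with hM
  have hM0 : 0 ≤ M := ENNReal.toReal_nonneg
  have hδ : 0 < ε / (M + 1) := div_pos hε (by linarith)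
  rw [Metric.tendstoUniformly_iff] at h
  obtain ⟨N, hN⟩ := (h _ hδ).exists_forall_of_atTop
  refine ⟨N, fun n hn => ?_⟩
  have key : ‖∫ a, (F n a - p a) ∂μ‖ ≤ (ε / (M + 1)) * M := by
    apply norm_integral_le_of_norm_le_const
    filter_upwards with a
    have := hN n hn a
    rw [dist_comm] at this
    simpa [Real.norm_eq_abs, abs_sub_comm, Real.dist_eq] using this.le
  rw [integral_sub (hF n) hp] at key
  have : (ε / (M + 1)) * M < ε := by
    rw [div_mul_eq_mul_div, div_lt_iff₀ (by linarith)]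
    nlinarith
  calc dist (∫ a, F n a ∂μ) (∫ a, p a ∂μ) = ‖(∫ a, F n a ∂μ) - ∫ a, p a ∂μ‖ := by
        rw [Real.dist_eq, Real.norm_eq_abs]
    _ ≤ (ε / (M + 1)) * M := key
    _ < ε := this

theorem stmt12 {n : ℕ} (K : Set (Fin n → ℝ)) (hK : IsCompact K) (hpc : IsPathConnected K)
    (g : K → Set.Icc (0:ℝ) 1) (hg : Measurable g)
    (f : Set.Icc (0:ℝ) 1 → K) (hf : Continuous f) (hfs : Function.Surjective f)
    (hfg : ∀ x, f (g x) = x)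
    (V : Submodule ℝ (K → ℝ)) (hVcont : ∀ v ∈ V, Continuous v)
    (h1 : (fun _ => (1:ℝ)) ∈ V)
    (L : V →ₗ[ℝ] ℝ)
    (W : Submodule ℝ (K → ℝ))
    (hW : W = V ⊔ Submodule.span ℝ (Set.range fun d : ℕ => fun x : K => (g x : ℝ) ^ d))
    (hpow : ∀ d : ℕ, (fun x : K => (g x : ℝ) ^ d) ∈ W)
    (Lbar : W →ₗ[ℝ] ℝ)
    (hext : ∀ (v : K → ℝ) (hv : v ∈ V), Lbar ⟨v, hW ▸ Submodule.mem_sup_left hv⟩ = L ⟨v, hv⟩)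
    (hcont : ∀ (ps : ℕ → Polynomial ℝ) (p : Set.Icc (0:ℝ) 1 → ℝ), Continuous p →
      TendstoUniformly (fun i (t : Set.Icc (0:ℝ) 1) => (ps i).eval (t : ℝ)) p atTop →
      ∀ (hmem : ∀ i, (fun x : K => (ps i).eval (g x : ℝ)) ∈ W)
        (hpg : (fun x : K => p (g x)) ∈ W),
        Tendsto (fun i => Lbar ⟨fun x : K => (ps i).eval (g x : ℝ), hmem i⟩) atTop
          (nhds (Lbar ⟨fun x : K => p (g x), hpg⟩)))
    (μt : Measure (Set.Icc (0:ℝ) 1)) [IsFiniteMeasure μt]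
    (hμt : ∀ d : ℕ, Lbar ⟨fun x : K => (g x : ℝ) ^ d, hpow d⟩ = ∫ t, (t : ℝ) ^ d ∂μt) :
    ∀ v : V, Integrable (v : K → ℝ) (μt.map f) ∧
      L v = ∫ x, (v : K → ℝ) x ∂(μt.map f) := by
  -- Basic facts
  have hint : ∀ (h : Set.Icc (0:ℝ) 1 → ℝ), Continuous h → Integrable h μt := by
    intro h hc
    exact hc.integrable_of_hasCompactSupport (isClosed_tsupport _).isCompact
  -- polynomial membership
  have hmemq : ∀ q : Polynomial ℝ, (fun x : K => q.eval (g x : ℝ)) ∈ W := by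
    intro q
    induction q using Polynomial.induction_on' with
    | add p q hp hq =>
      have := W.add_mem hp hq
      simpa [Polynomial.eval_add, Pi.add_def] using this
    | monomial m a =>
      have := W.smul_mem a (hpow m)
      simpa [Polynomial.eval_monomial, Pi.smul_def] using this
  -- Lbar of polynomial in g equals integral of polynomial
  have hLq : ∀ q : Polynomial ℝ,
      Lbar ⟨fun x : K => q.eval (g x : ℝ), hmemq q⟩ = ∫ t, q.eval (t : ℝ) ∂μt := by
    intro q
    have hrep : (⟨fun x : K => q.eval (g x : ℝ), hmemq q⟩ : W)
        = ∑ i ∈ Finset.range (q.natDegree + 1),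
            q.coeff i • (⟨fun x : K => (g x : ℝ) ^ i, hpow i⟩ : W) := by
      apply Subtype.ext
      funext x
      have := Polynomial.eval_eq_sum_range (p := q) (x := (g x : ℝ))
      simpa [Submodule.coe_sum] using this
    rw [hrep, map_sum]
    have : ∀ i ∈ Finset.range (q.natDegree + 1),
        Lbar (q.coeff i • (⟨fun x : K => (g x : ℝ) ^ i, hpow i⟩ : W))
          = ∫ t, q.coeff i * (t : ℝ) ^ i ∂μt := by
      intro i _
      rw [_root_.map_smul, smul_eq_mul, hμt i, ← integral_const_mul]
    rw [Finset.sum_congr rfl this, ← integral_finset_sum]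
    · congr 1
      funext t
      exact (Polynomial.eval_eq_sum_range (p := q) (x := (t : ℝ))).symm
    · intro i _
      exact hint _ (continuous_const.mul (continuous_subtype_val.pow i))
  intro v
  obtain ⟨v, hv⟩ := v
  have hvc : Continuous v := hVcont v hv
  have hvf : Continuous (fun t : Set.Icc (0:ℝ) 1 => v (f t)) := hvc.comp hf
  have hfm : Measurable f := hf.measurable
  have hsm : AEStronglyMeasurable v (μt.map f) := hvc.aestronglyMeasurable
  have hvint : Integrable v (μt.map f) :=
    (integrable_map_measure hsm hfm.aemeasurable).mpr (hint _ hvf)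
  refine ⟨hvint, ?_⟩
  rw [integral_map hfm.aemeasurable hsm]
  -- Weierstrass approximation
  set cf : C(Set.Icc (0:ℝ) 1, ℝ) := ⟨fun t => v (f t), hvf⟩ with hcf
  have hps : ∀ i : ℕ, ∃ q : Polynomial ℝ,
      ‖q.toContinuousMapOn (Set.Icc (0:ℝ) 1) - cf‖ < 1 / (i + 1 : ℝ) :=
    fun i => exists_polynomial_near_continuousMap 0 1 cf _ (by positivity)
  choose ps hps using hps
  have hu : TendstoUniformly (fun i (t : Set.Icc (0:ℝ) 1) => (ps i).eval (t : ℝ))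
      (fun t => v (f t)) atTop := by
    rw [Metric.tendstoUniformly_iff]
    intro ε hε
    obtain ⟨N, hN⟩ := exists_nat_one_div_lt hε
    filter_upwards [eventually_ge_atTop N] with i hi t
    have h1' : dist (cf t) (((ps i).toContinuousMapOn (Set.Icc (0:ℝ) 1)) t)
        ≤ ‖(ps i).toContinuousMapOn (Set.Icc (0:ℝ) 1) - cf‖ := by
      rw [dist_comm, ← dist_eq_norm]
      exact ContinuousMap.dist_apply_le_dist t
    have h2' : (1 : ℝ) / (i + 1) ≤ 1 / (N + 1) := by
      apply one_div_le_one_div_of_le (by positivity)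
      have : (N : ℝ) ≤ i := Nat.cast_le.mpr hi
      linarith
    calc dist (v (f t)) ((ps i).eval (t : ℝ))
        ≤ ‖(ps i).toContinuousMapOn (Set.Icc (0:ℝ) 1) - cf‖ := h1'
      _ < 1 / (i + 1 : ℝ) := hps i
      _ ≤ 1 / (N + 1 : ℝ) := h2'
      _ < ε := hN
  -- membership of v ∘ f ∘ g = v in W
  have heq : (fun x : K => v (f (g x))) = v := funext fun x => by rw [hfg]
  have hpg : (fun x : K => v (f (g x))) ∈ W := by
    rw [heq]; exact hW ▸ Submodule.mem_sup_left hv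
  have hA := hcont ps (fun t => v (f t)) hvf hu (fun i => hmemq (ps i)) hpg
  have hB : Lbar ⟨fun x : K => v (f (g x)), hpg⟩ = L ⟨v, hv⟩ := by
    have : (⟨fun x : K => v (f (g x)), hpg⟩ : W)
        = ⟨v, hW ▸ Submodule.mem_sup_left hv⟩ := Subtype.ext heq
    rw [this, hext]
  have hC : Tendsto (fun i => Lbar ⟨fun x : K => (ps i).eval (g x : ℝ), hmemq (ps i)⟩)
      atTop (nhds (∫ t, v (f t) ∂μt)) := by
    have : (fun i => Lbar ⟨fun x : K => (ps i).eval (g x : ℝ), hmemq (ps i)⟩)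
        = fun i => ∫ t, (ps i).eval (t : ℝ) ∂μt := funext fun i => hLq (ps i)
    rw [this]
    exact tendsto_integral_of_unif (fun i => hint _ ((ps i).continuous.comp continuous_subtype_val)) (hint _ hvf) hu
  rw [← hB]
  exact tendsto_nhds_unique hA hC
end

section
/- Daniell's representation theorem: let ℱ be a lattice of real-valued functions on a set X (closed under non-negative scalar multiples, sums, pointwise infima with each other and with non-negative constants, and differences g − f when f ≤ g), and let L : ℱ → ℝ satisfy additivity L(f+g) = L(f)+L(g), positive homogeneity L(c·f) = c·L(f) for c ≥ 0, monotonicity L(f) ≤ L(g) for f ≤ g, and the continuity property L(f_n) ↗ L(g) whenever f_n ∈ ℱ, f_n ↗ g ∈ ℱ pointwise. Then there exists a measure μ on (X, 𝒜) with 𝒜 = σ({f⁻¹((−∞, a]) : a ∈ ℝ, f ∈ ℱ}) such that L(f) = ∫_X f dμ for all f ∈ ℱ. -/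
open MeasureTheory Filter Set
open scoped ENNReal

namespace Stmt19

structure Daniell {X : Type*} (F : Set (X → ℝ)) (L : (X → ℝ) → ℝ) : Prop where
  zero_mem : (0 : X → ℝ) ∈ F
  scal : ∀ c : ℝ, 0 ≤ c → ∀ f ∈ F, c • f ∈ F
  add : ∀ f ∈ F, ∀ g ∈ F, f + g ∈ F
  inf : ∀ f ∈ F, ∀ g ∈ F, (fun x => min (f x) (g x)) ∈ F
  infc : ∀ c : ℝ, 0 ≤ c → ∀ f ∈ F, (fun x => min (f x) c) ∈ F
  sub : ∀ f ∈ F, ∀ g ∈ F, (∀ x, f x ≤ g x) → g - f ∈ F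
  Ladd : ∀ f ∈ F, ∀ g ∈ F, L (f + g) = L f + L g
  Lscal : ∀ c : ℝ, 0 ≤ c → ∀ f ∈ F, L (c • f) = c * L f
  Lmono : ∀ f ∈ F, ∀ g ∈ F, (∀ x, f x ≤ g x) → L f ≤ L g
  Lcont : ∀ (fn : ℕ → X → ℝ) (g : X → ℝ), (∀ i, fn i ∈ F) → g ∈ F →
      (∀ i x, fn i x ≤ fn (i + 1) x) →
      (∀ x, Tendsto (fun i => fn i x) atTop (nhds (g x))) →
      Tendsto (fun i => L (fn i)) atTop (nhds (L g))

variable {X : Type*} {F : Set (X → ℝ)} {L : (X → ℝ) → ℝ}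

lemma Daniell.Lzero (hD : Daniell F L) : L 0 = 0 := by
  have h := hD.Lscal 0 le_rfl 0 hD.zero_mem
  simpa using h

lemma Daniell.Lnn (hD : Daniell F L) {f : X → ℝ} (hf : f ∈ F) (h0 : ∀ x, 0 ≤ f x) :
    0 ≤ L f := by
  have := hD.Lmono 0 hD.zero_mem f hf (by simpa using h0)
  rwa [hD.Lzero] at this

lemma Daniell.Lsub (hD : Daniell F L) {f g : X → ℝ} (hf : f ∈ F) (hg : g ∈ F)
    (hle : ∀ x, f x ≤ g x) : L (g - f) = L g - L f := by
  have h1 : g - f + f = g := by ext x; simp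
  have := hD.Ladd (g - f) (hD.sub f hf g hg hle) f hf
  rw [h1] at this
  linarith

/-- key convergence helper on reals -/
lemma tendsto_min_of_ofReal_le {g : ℝ} (hg : 0 ≤ g) (a : ℕ → ℝ) (ha : ∀ n, 0 ≤ a n)
    (hmono : ∀ n, a n ≤ a (n + 1))
    (hle : ENNReal.ofReal g ≤ ⨆ n, ENNReal.ofReal (a n)) :
    Tendsto (fun n => min g (a n)) atTop (nhds g) := by
  have hmono' : Monotone a := monotone_nat_of_le_succ hmono
  have hmonomin : Monotone (fun n => min g (a n)) := fun i j hij =>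
    min_le_min le_rfl (hmono' hij)
  have hbdd : BddAbove (Set.range fun n => min g (a n)) :=
    ⟨g, by rintro y ⟨n, rfl⟩; exact min_le_left _ _⟩
  have htend := tendsto_atTop_ciSup hmonomin hbdd
  have hsup : (⨆ n, min g (a n)) = g := by
    by_cases hex : ∃ n, g ≤ a n
    · obtain ⟨n, hn⟩ := hex
      apply le_antisymm
      · exact ciSup_le fun m => min_le_left _ _
      · have : min g (a n) = g := min_eq_left hn
        calc g = min g (a n) := this.symm
        _ ≤ _ := le_ciSup hbdd n
    · push_neg at hex
      have hmin : ∀ n, min g (a n) = a n := fun n => min_eq_right (hex n).le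
      have hbdd2 : BddAbove (Set.range a) := ⟨g, by rintro y ⟨n, rfl⟩; exact (hex n).le⟩
      have hs0 : 0 ≤ ⨆ n, a n := le_trans (ha 0) (le_ciSup hbdd2 0)
      have hgs : g ≤ ⨆ n, a n := by
        rw [← ENNReal.ofReal_le_ofReal_iff hs0]
        refine hle.trans (iSup_le fun n => ENNReal.ofReal_le_ofReal (le_ciSup hbdd2 n))
      have : (⨆ n, min g (a n)) = ⨆ n, a n := by
        congr 1; ext n; exact hmin n
      rw [this]
      exact le_antisymm (ciSup_le fun n => (hex n).le) hgs
  rwa [hsup] at htend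

/-- Lemma (A): if g ∈ F, g ≥ 0 is dominated by sup of an increasing nonneg sequence in F,
then L g is dominated by sup of the L values. -/
lemma Daniell.le_sup (hD : Daniell F L) (f : ℕ → X → ℝ) (hf : ∀ n, f n ∈ F)
    (hnn : ∀ n x, 0 ≤ f n x) (hmono : ∀ n x, f n x ≤ f (n + 1) x)
    {g : X → ℝ} (hg : g ∈ F) (hgnn : ∀ x, 0 ≤ g x)
    (hle : ∀ x, ENNReal.ofReal (g x) ≤ ⨆ n, ENNReal.ofReal (f n x)) :
    ENNReal.ofReal (L g) ≤ ⨆ n, ENNReal.ofReal (L (f n)) := by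
  set gn : ℕ → X → ℝ := fun n x => min (g x) (f n x) with hgn
  have hgnF : ∀ n, gn n ∈ F := fun n => hD.inf g hg (f n) (hf n)
  have hgnmono : ∀ n x, gn n x ≤ gn (n + 1) x := fun n x =>
    min_le_min le_rfl (hmono n x)
  have hgtend : ∀ x, Tendsto (fun n => gn n x) atTop (nhds (g x)) := fun x =>
    tendsto_min_of_ofReal_le (hgnn x) (fun n => f n x) (fun n => hnn n x)
      (fun n => hmono n x) (hle x)
  have hLt := hD.Lcont gn g hgnF hg hgnmono hgtend
  have hLt' : Tendsto (fun n => ENNReal.ofReal (L (gn n))) atTop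
      (nhds (ENNReal.ofReal (L g))) :=
    (ENNReal.continuous_ofReal.tendsto _).comp hLt
  refine le_of_tendsto hLt' (Eventually.of_forall fun n => ?_)
  refine le_trans (ENNReal.ofReal_le_ofReal ?_) (le_iSup (fun n => ENNReal.ofReal (L (f n))) n)
  exact hD.Lmono _ (hgnF n) _ (hf n) fun x => min_le_right _ _

variable {X : Type*} (F : Set (X → ℝ)) (L : (X → ℝ) → ℝ)

/-- `h` is the increasing limit of the nonneg sequence `f` in `F`. -/
structure IsRep (f : ℕ → X → ℝ) (h : X → ℝ≥0∞) : Prop where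
  mem : ∀ n, f n ∈ F
  nonneg : ∀ n x, 0 ≤ f n x
  mono : ∀ n x, f n x ≤ f (n + 1) x
  hsup : ∀ x, h x = ⨆ n, ENNReal.ofReal (f n x)

def Up : Set (X → ℝ≥0∞) := {h | ∃ f, IsRep F f h}

noncomputable def ell (h : X → ℝ≥0∞) : ℝ≥0∞ :=
  ⨆ g ∈ {g | g ∈ F ∧ (∀ x, 0 ≤ g x) ∧ ∀ x, ENNReal.ofReal (g x) ≤ h x},
    ENNReal.ofReal (L g)

variable {F L}

lemma le_ell {h : X → ℝ≥0∞} {g : X → ℝ} (hg : g ∈ F) (hnn : ∀ x, 0 ≤ g x)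
    (hle : ∀ x, ENNReal.ofReal (g x) ≤ h x) : ENNReal.ofReal (L g) ≤ ell F L h := by
  simp only [ell]
  exact le_iSup₂ (f := fun g (_ : g ∈ {g | g ∈ F ∧ (∀ x, 0 ≤ g x) ∧
    ∀ x, ENNReal.ofReal (g x) ≤ h x}) => ENNReal.ofReal (L g)) g ⟨hg, hnn, hle⟩

lemma ell_mono {h h' : X → ℝ≥0∞} (hle : ∀ x, h x ≤ h' x) : ell F L h ≤ ell F L h' := by
  simp only [ell]
  refine iSup_le fun g => iSup_le fun hg => ?_
  exact le_ell hg.1 hg.2.1 fun x => (hg.2.2 x).trans (hle x)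

lemma IsRep.monoN {f : ℕ → X → ℝ} {h : X → ℝ≥0∞} (hr : IsRep F f h) :
    ∀ x, Monotone fun n => f n x := fun x =>
  monotone_nat_of_le_succ fun n => hr.mono n x

lemma IsRep.le {f : ℕ → X → ℝ} {h : X → ℝ≥0∞} (hr : IsRep F f h) (n : ℕ) (x : X) :
    ENNReal.ofReal (f n x) ≤ h x := by
  rw [hr.hsup x]; exact le_iSup (fun n => ENNReal.ofReal (f n x)) n

/-- `ell` evaluated through a representation. -/
lemma Daniell.ell_rep (hD : Daniell F L) {f : ℕ → X → ℝ} {h : X → ℝ≥0∞}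
    (hr : IsRep F f h) : ell F L h = ⨆ n, ENNReal.ofReal (L (f n)) := by
  apply le_antisymm
  · simp only [ell]
    refine iSup_le fun g => iSup_le fun hg => ?_
    exact hD.le_sup f hr.mem hr.nonneg hr.mono hg.1 hg.2.1 fun x =>
      (hg.2.2 x).trans_eq (hr.hsup x)
  · exact iSup_le fun n => le_ell (hr.mem n) (hr.nonneg n) (hr.le n)

lemma isRep_const {f : X → ℝ} (hf : f ∈ F) (hnn : ∀ x, 0 ≤ f x) :
    IsRep F (fun _ => f) (fun x => ENNReal.ofReal (f x)) :=
  ⟨fun _ => hf, fun _ => hnn, fun _ x => le_rfl, fun x => by simp⟩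

lemma Daniell.ell_ofReal (hD : Daniell F L) {f : X → ℝ} (hf : f ∈ F)
    (hnn : ∀ x, 0 ≤ f x) : ell F L (fun x => ENNReal.ofReal (f x)) = ENNReal.ofReal (L f) := by
  rw [hD.ell_rep (isRep_const hf hnn)]; simp

lemma Daniell.isRep_add (hD : Daniell F L) {f g : ℕ → X → ℝ} {h k : X → ℝ≥0∞}
    (hf : IsRep F f h) (hg : IsRep F g k) :
    IsRep F (fun n => f n + g n) (fun x => h x + k x) := by
  refine ⟨fun n => hD.add _ (hf.mem n) _ (hg.mem n),
    fun n x => add_nonneg (hf.nonneg n x) (hg.nonneg n x),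
    fun n x => add_le_add (hf.mono n x) (hg.mono n x), fun x => ?_⟩
  rw [hf.hsup x, hg.hsup x,
    ENNReal.iSup_add_iSup_of_monotone
      (fun i j hij => ENNReal.ofReal_le_ofReal (hf.monoN x hij))
      (fun i j hij => ENNReal.ofReal_le_ofReal (hg.monoN x hij))]
  exact iSup_congr fun n => (ENNReal.ofReal_add (hf.nonneg n x) (hg.nonneg n x)).symm

lemma Daniell.isRep_min (hD : Daniell F L) {f g : ℕ → X → ℝ} {h k : X → ℝ≥0∞}
    (hf : IsRep F f h) (hg : IsRep F g k) :
    IsRep F (fun n x => min (f n x) (g n x)) (fun x => min (h x) (k x)) := by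
  refine ⟨fun n => hD.inf _ (hf.mem n) _ (hg.mem n),
    fun n x => le_min (hf.nonneg n x) (hg.nonneg n x),
    fun n x => min_le_min (hf.mono n x) (hg.mono n x), fun x => ?_⟩
  rw [hf.hsup x, hg.hsup x, ← iSup_inf_of_monotone
      (f := fun n => ENNReal.ofReal (f n x)) (g := fun n => ENNReal.ofReal (g n x))
      (fun i j hij => ENNReal.ofReal_le_ofReal (hf.monoN x hij))
      (fun i j hij => ENNReal.ofReal_le_ofReal (hg.monoN x hij))]
  exact iSup_congr fun n => by
    rw [← Monotone.map_min (fun a b hab => ENNReal.ofReal_le_ofReal hab)]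

/-- maximum of two elements of F with nonneg values is in F -/
lemma Daniell.max_mem (hD : Daniell F L) {f g : X → ℝ} (hf : f ∈ F) (hg : g ∈ F)
    (hfn : ∀ x, 0 ≤ f x) (hgn : ∀ x, 0 ≤ g x) : (fun x => max (f x) (g x)) ∈ F := by
  have : (fun x => max (f x) (g x)) = (f + g) - fun x => min (f x) (g x) := by
    ext x; simp [Pi.sub_apply, Pi.add_apply]
    rcases le_total (f x) (g x) with hle | hle
    · rw [min_eq_left hle, max_eq_right hle]; ring
    · rw [min_eq_right hle, max_eq_left hle]; ring
  rw [this]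
  exact hD.sub _ (hD.inf _ hf _ hg) _ (hD.add _ hf _ hg) fun x =>
    (min_le_left _ _).trans (le_add_of_nonneg_right (hgn x))

lemma Daniell.L_min_add_max (hD : Daniell F L) {f g : X → ℝ} (hf : f ∈ F) (hg : g ∈ F)
    (hfn : ∀ x, 0 ≤ f x) (hgn : ∀ x, 0 ≤ g x) :
    L (fun x => min (f x) (g x)) + L (fun x => max (f x) (g x)) = L f + L g := by
  have h1 : (fun x => min (f x) (g x)) + (fun x => max (f x) (g x)) = f + g := by
    ext x; simp [min_add_max]
  have := hD.Ladd _ (hD.inf _ hf _ hg) _ (hD.max_mem hf hg hfn hgn)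
  rw [h1, hD.Ladd _ hf _ hg] at this
  linarith

lemma Daniell.isRep_max (hD : Daniell F L) {f g : ℕ → X → ℝ} {h k : X → ℝ≥0∞}
    (hf : IsRep F f h) (hg : IsRep F g k) :
    IsRep F (fun n x => max (f n x) (g n x)) (fun x => max (h x) (k x)) := by
  refine ⟨fun n => hD.max_mem (hf.mem n) (hg.mem n) (hf.nonneg n) (hg.nonneg n),
    fun n x => le_max_of_le_left (hf.nonneg n x),
    fun n x => max_le_max (hf.mono n x) (hg.mono n x), fun x => ?_⟩
  rw [hf.hsup x, hg.hsup x, ← iSup_sup_eq]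
  exact iSup_congr fun n => by
    rw [← Monotone.map_max (fun a b hab => ENNReal.ofReal_le_ofReal hab)]

lemma sub_min_eq (a u : ℝ) : a - min a u = max (a - u) 0 := by
  rcases le_total a u with hle | hle
  · rw [min_eq_left hle, max_eq_right (by linarith)]; ring
  · rw [min_eq_right hle, max_eq_left (by linarith)]

/-- representation of `h - u` for `u ∈ F` nonneg. -/
lemma Daniell.isRep_sub (hD : Daniell F L) {f : ℕ → X → ℝ} {h : X → ℝ≥0∞}
    (hf : IsRep F f h) {u : X → ℝ} (hu : u ∈ F) (hun : ∀ x, 0 ≤ u x) :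
    IsRep F (fun n => f n - fun x => min (f n x) (u x))
      (fun x => h x - ENNReal.ofReal (u x)) := by
  refine ⟨fun n => hD.sub _ (hD.inf _ (hf.mem n) _ hu) _ (hf.mem n)
      (fun x => min_le_left _ _),
    fun n x => sub_nonneg.mpr (min_le_left _ _),
    fun n x => ?_, fun x => ?_⟩
  · simp only [Pi.sub_apply, sub_min_eq]
    exact max_le_max (by linarith [hf.mono n x]) le_rfl
  · rw [hf.hsup x, ENNReal.iSup_sub]
    refine iSup_congr fun n => ?_
    simp only [Pi.sub_apply, sub_min_eq]
    rcases le_total (f n x) (u x) with hle | hle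
    · rw [max_eq_right (by linarith)]
      simp [tsub_eq_zero_of_le (ENNReal.ofReal_le_ofReal hle)]
    · rw [max_eq_left (by linarith), ENNReal.ofReal_sub _ (hun x)]

/-- running pointwise maximum -/
def maxSeq (φ : ℕ → X → ℝ) : ℕ → X → ℝ
  | 0 => φ 0
  | k + 1 => fun x => max (maxSeq φ k x) (φ (k + 1) x)

lemma le_maxSeq (φ : ℕ → X → ℝ) {j k : ℕ} (hjk : j ≤ k) (x : X) :
    φ j x ≤ maxSeq φ k x := by
  induction k with
  | zero => simp_all [maxSeq, Nat.le_zero.mp hjk]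
  | succ k ih =>
    rcases Nat.lt_or_ge j (k + 1) with hlt | hge
    · exact le_trans (ih (Nat.lt_succ_iff.mp hlt)) (le_max_left _ _)
    · have : j = k + 1 := le_antisymm hjk hge
      subst this; exact le_max_right _ _

lemma maxSeq_le (φ : ℕ → X → ℝ) {k : ℕ} {x : X} {c : ℝ}
    (hc : ∀ j ≤ k, φ j x ≤ c) : maxSeq φ k x ≤ c := by
  induction k with
  | zero => exact hc 0 le_rfl
  | succ k ih =>
    exact max_le (ih fun j hj => hc j (hj.trans (Nat.le_succ k))) (hc (k + 1) le_rfl)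

lemma maxSeq_attained (φ : ℕ → X → ℝ) (k : ℕ) (x : X) :
    ∃ j ≤ k, maxSeq φ k x = φ j x := by
  induction k with
  | zero => exact ⟨0, le_rfl, rfl⟩
  | succ k ih =>
    obtain ⟨j, hj, hje⟩ := ih
    rcases le_total (maxSeq φ k x) (φ (k + 1) x) with hle | hle
    · exact ⟨k + 1, le_rfl, max_eq_right hle⟩
    · exact ⟨j, hj.trans (Nat.le_succ k), by rw [show maxSeq φ (k+1) x = _ from max_eq_left hle, hje]⟩

lemma Daniell.maxSeq_mem (hD : Daniell F L) {φ : ℕ → X → ℝ} (hφ : ∀ j, φ j ∈ F)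
    (hnn : ∀ j x, 0 ≤ φ j x) (k : ℕ) : maxSeq φ k ∈ F := by
  induction k with
  | zero => exact hφ 0
  | succ k ih =>
    exact hD.max_mem ih (hφ (k + 1)) (fun x => le_trans (hnn 0 x) (le_maxSeq φ (Nat.zero_le k) x))
      (hnn (k + 1))

/-- Monotone convergence for the class Up together with continuity of ell. -/
lemma Daniell.up_iSup (hD : Daniell F L) (h : ℕ → X → ℝ≥0∞) (hU : ∀ j, h j ∈ Up F)
    (hmono : ∀ j x, h j x ≤ h (j + 1) x) :
    (fun x => ⨆ j, h j x) ∈ Up F ∧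
      ell F L (fun x => ⨆ j, h j x) = ⨆ j, ell F L (h j) := by
  choose f hf using hU
  have hmono' : ∀ x, Monotone fun j => h j x := fun x =>
    monotone_nat_of_le_succ fun j => hmono j x
  set Fm : ℕ → X → ℝ := fun n => maxSeq (fun j => f j n) n with hFm
  have hFmF : ∀ n, Fm n ∈ F := fun n =>
    hD.maxSeq_mem (fun j => (hf j).mem n) (fun j x => (hf j).nonneg n x) n
  have hFmnn : ∀ n x, 0 ≤ Fm n x := fun n x =>
    le_trans ((hf 0).nonneg n x) (le_maxSeq (fun j => f j n) (Nat.zero_le n) x)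
  have hFmmono : ∀ n x, Fm n x ≤ Fm (n + 1) x := by
    intro n x
    refine maxSeq_le _ fun j hj => ?_
    exact le_trans ((hf j).mono n x) (le_maxSeq (fun j => f j (n+1)) (hj.trans (Nat.le_succ n)) x)
  -- each Fm n is ≤ h n pointwise in the ENNReal sense
  have hFmle : ∀ n x, ENNReal.ofReal (Fm n x) ≤ h n x := by
    intro n x
    obtain ⟨j, hj, hje⟩ := maxSeq_attained (fun j => f j n) n x
    show ENNReal.ofReal (maxSeq (fun j => f j n) n x) ≤ h n x
    rw [hje]
    exact le_trans ((hf j).le n x) (hmono' x hj)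
  have hrep : IsRep F Fm (fun x => ⨆ j, h j x) := by
    refine ⟨hFmF, hFmnn, hFmmono, fun x => ?_⟩
    apply le_antisymm
    · refine iSup_le fun j => ?_
      rw [(hf j).hsup x]
      refine iSup_le fun n => ?_
      calc ENNReal.ofReal (f j n x)
          ≤ ENNReal.ofReal (f j (max j n) x) :=
            ENNReal.ofReal_le_ofReal ((hf j).monoN x (le_max_right j n))
        _ ≤ ENNReal.ofReal (Fm (max j n) x) :=
            ENNReal.ofReal_le_ofReal (le_maxSeq (fun i => f i (max j n)) (le_max_left j n) x)
        _ ≤ ⨆ m, ENNReal.ofReal (Fm m x) := le_iSup (fun m => ENNReal.ofReal (Fm m x)) (max j n)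
    · exact iSup_le fun n => le_trans (hFmle n x) (le_iSup (fun j => h j x) n)
  refine ⟨⟨Fm, hrep⟩, le_antisymm ?_ ?_⟩
  · rw [hD.ell_rep hrep]
    refine iSup_le fun n => ?_
    exact le_trans (le_ell (hFmF n) (hFmnn n) (hFmle n)) (le_iSup (fun j => ell F L (h j)) n)
  · exact iSup_le fun j => ell_mono fun x => le_iSup (fun j => h j x) j

lemma Daniell.up_min (hD : Daniell F L) {h k : X → ℝ≥0∞} (hh : h ∈ Up F) (hk : k ∈ Up F) :
    (fun x => min (h x) (k x)) ∈ Up F := by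
  obtain ⟨f, hf⟩ := hh; obtain ⟨g, hg⟩ := hk
  exact ⟨_, hD.isRep_min hf hg⟩

lemma Daniell.up_max (hD : Daniell F L) {h k : X → ℝ≥0∞} (hh : h ∈ Up F) (hk : k ∈ Up F) :
    (fun x => max (h x) (k x)) ∈ Up F := by
  obtain ⟨f, hf⟩ := hh; obtain ⟨g, hg⟩ := hk
  exact ⟨_, hD.isRep_max hf hg⟩

lemma Daniell.iSup_ofReal_L (hD : Daniell F L) {f g : ℕ → X → ℝ}
    (hf : ∀ n, f n ∈ F) (hg : ∀ n, g n ∈ F)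
    (hfm : ∀ n x, f n x ≤ f (n+1) x) (hgm : ∀ n x, g n x ≤ g (n+1) x)
    (hfn : ∀ n x, 0 ≤ f n x) (hgn : ∀ n x, 0 ≤ g n x) :
    (⨆ n, ENNReal.ofReal (L (f n))) + (⨆ n, ENNReal.ofReal (L (g n)))
      = ⨆ n, ENNReal.ofReal (L (f n) + L (g n)) := by
  rw [ENNReal.iSup_add_iSup_of_monotone
    (fun i j hij => ENNReal.ofReal_le_ofReal
      (hD.Lmono _ (hf i) _ (hf j) fun x => (monotone_nat_of_le_succ (fun n => hfm n x)) hij))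
    (fun i j hij => ENNReal.ofReal_le_ofReal
      (hD.Lmono _ (hg i) _ (hg j) fun x => (monotone_nat_of_le_succ (fun n => hgm n x)) hij))]
  exact iSup_congr fun n => (ENNReal.ofReal_add (hD.Lnn (hf n) (hfn n)) (hD.Lnn (hg n) (hgn n))).symm

lemma Daniell.ell_add (hD : Daniell F L) {h k : X → ℝ≥0∞} (hh : h ∈ Up F) (hk : k ∈ Up F) :
    ell F L (fun x => h x + k x) = ell F L h + ell F L k := by
  obtain ⟨f, hf⟩ := hh; obtain ⟨g, hg⟩ := hk
  rw [hD.ell_rep (hD.isRep_add hf hg), hD.ell_rep hf, hD.ell_rep hg,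
    hD.iSup_ofReal_L hf.mem hg.mem hf.mono hg.mono hf.nonneg hg.nonneg]
  exact iSup_congr fun n => by rw [hD.Ladd _ (hf.mem n) _ (hg.mem n)]

lemma Daniell.ell_max_add_min (hD : Daniell F L) {h k : X → ℝ≥0∞} (hh : h ∈ Up F) (hk : k ∈ Up F) :
    ell F L (fun x => max (h x) (k x)) + ell F L (fun x => min (h x) (k x))
      = ell F L h + ell F L k := by
  obtain ⟨f, hf⟩ := hh; obtain ⟨g, hg⟩ := hk
  rw [hD.ell_rep (hD.isRep_max hf hg), hD.ell_rep (hD.isRep_min hf hg),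
    hD.ell_rep hf, hD.ell_rep hg]
  rw [hD.iSup_ofReal_L (fun n => hD.max_mem (hf.mem n) (hg.mem n) (hf.nonneg n) (hg.nonneg n))
      (fun n => hD.inf _ (hf.mem n) _ (hg.mem n))
      (fun n x => max_le_max (hf.mono n x) (hg.mono n x))
      (fun n x => min_le_min (hf.mono n x) (hg.mono n x))
      (fun n x => le_max_of_le_left (hf.nonneg n x))
      (fun n x => le_min (hf.nonneg n x) (hg.nonneg n x)),
    hD.iSup_ofReal_L hf.mem hg.mem hf.mono hg.mono hf.nonneg hg.nonneg]
  refine iSup_congr fun n => ?_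
  rw [add_comm (L _), hD.L_min_add_max (hf.mem n) (hg.mem n) (hf.nonneg n) (hg.nonneg n)]

/-! ### The outer measure -/

variable (F L) in
noncomputable def mustar (A : Set X) : ℝ≥0∞ :=
  ⨅ h ∈ {h | h ∈ Up F ∧ ∀ x ∈ A, 1 ≤ h x}, ell F L h

lemma mustar_le {A : Set X} {h : X → ℝ≥0∞} (hh : h ∈ Up F) (h1 : ∀ x ∈ A, 1 ≤ h x) :
    mustar F L A ≤ ell F L h :=
  iInf₂_le h ⟨hh, h1⟩

lemma mustar_mono {A B : Set X} (hAB : A ⊆ B) : mustar F L A ≤ mustar F L B :=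
  le_iInf₂ fun h hh => mustar_le hh.1 fun x hx => hh.2 x (hAB hx)

lemma mustar_lt_iff {A : Set X} {r : ℝ≥0∞} :
    mustar F L A < r ↔ ∃ h, (h ∈ Up F ∧ ∀ x ∈ A, 1 ≤ h x) ∧ ell F L h < r := by
  simp only [mustar, iInf_lt_iff, mem_setOf_eq, exists_prop]

lemma Daniell.up_zero (hD : Daniell F L) : (fun _ : X => (0 : ℝ≥0∞)) ∈ Up F := by
  refine ⟨fun _ => 0, fun _ => hD.zero_mem, fun _ x => le_rfl, fun _ x => le_rfl, fun x => by simp⟩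

lemma Daniell.ell_zero (hD : Daniell F L) : ell F L (fun _ : X => (0 : ℝ≥0∞)) = 0 := by
  have : (fun x : X => ENNReal.ofReal ((0 : X → ℝ) x)) = fun _ : X => (0 : ℝ≥0∞) := by simp
  rw [← this, hD.ell_ofReal hD.zero_mem (fun x => le_rfl), hD.Lzero]; simp

lemma Daniell.mustar_empty (hD : Daniell F L) : mustar F L (∅ : Set X) = 0 := by
  refine le_antisymm ?_ zero_le
  refine le_trans (mustar_le hD.up_zero (fun x hx => absurd hx (notMem_empty x))) ?_
  rw [hD.ell_zero]

lemma tsum_eps (ε : ℝ≥0∞) : ∑' i : ℕ, ε / 2 ^ (i + 1) = ε := by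
  have h2 : ∀ i : ℕ, ε / 2 ^ (i + 1) = ε * 2⁻¹ * (2⁻¹ : ℝ≥0∞) ^ i := by
    intro i
    rw [div_eq_mul_inv, pow_succ, ENNReal.mul_inv (by norm_num) (by norm_num),
      ← ENNReal.inv_pow]
    ring
  simp_rw [h2]
  rw [ENNReal.tsum_mul_left, ENNReal.tsum_geometric, ENNReal.one_sub_inv_two, inv_inv,
    mul_assoc, ENNReal.inv_mul_cancel (by norm_num) (by norm_num), mul_one]

lemma geom_sum_le (ε : ℝ≥0∞) (m : ℕ) : ∑ i ∈ Finset.range m, ε / 2 ^ (i + 1) ≤ ε := by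
  refine le_trans (ENNReal.sum_le_tsum _) (le_of_eq (tsum_eps ε))

lemma Daniell.up_add (hD : Daniell F L) {h k : X → ℝ≥0∞} (hh : h ∈ Up F) (hk : k ∈ Up F) :
    (fun x => h x + k x) ∈ Up F := by
  obtain ⟨f, hf⟩ := hh; obtain ⟨g, hg⟩ := hk
  exact ⟨_, hD.isRep_add hf hg⟩

lemma Daniell.mustar_iUnion_le (hD : Daniell F L) (A : ℕ → Set X) :
    mustar F L (⋃ i, A i) ≤ ∑' i, mustar F L (A i) := by
  refine ENNReal.le_of_forall_pos_le_add fun ε hε hfin => ?_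
  have hfin' : ∀ i, mustar F L (A i) ≠ ∞ := fun i =>
    (lt_of_le_of_lt (ENNReal.le_tsum i) hfin).ne
  have hch : ∀ i : ℕ, ∃ h, (h ∈ Up F ∧ ∀ x ∈ A i, 1 ≤ h x) ∧
      ell F L h ≤ mustar F L (A i) + (ε : ℝ≥0∞) / 2 ^ (i + 1) := by
    intro i
    have hpos : ((ε : ℝ≥0∞) / 2 ^ (i + 1)) ≠ 0 := by
      simp [ENNReal.div_eq_zero_iff, hε.ne']
    obtain ⟨h, hq, hlt⟩ := mustar_lt_iff.mp (ENNReal.lt_add_right (hfin' i) hpos)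
    exact ⟨h, hq, hlt.le⟩
  choose h hq hle using hch
  set Sn : ℕ → X → ℝ≥0∞ := fun n x => ∑ i ∈ Finset.range (n + 1), h i x with hSn
  have hSnUp : ∀ n, Sn n ∈ Up F ∧ ell F L (Sn n) = ∑ i ∈ Finset.range (n + 1), ell F L (h i) := by
    intro n
    induction n with
    | zero =>
      constructor
      · have : Sn 0 = h 0 := by ext x; simp [hSn]
        rw [this]; exact (hq 0).1
      · have : Sn 0 = h 0 := by ext x; simp [hSn]
        rw [this]; simp
    | succ n ih =>
      have heq : Sn (n + 1) = fun x => Sn n x + h (n + 1) x := by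
        ext x; simp [hSn, Finset.sum_range_succ]
      constructor
      · rw [heq]; exact hD.up_add ih.1 (hq (n + 1)).1
      · rw [heq, hD.ell_add ih.1 (hq (n + 1)).1, ih.2, Finset.sum_range_succ _ (n + 1)]
  have hSmono : ∀ n x, Sn n x ≤ Sn (n + 1) x := by
    intro n x
    simp only [hSn, Finset.sum_range_succ]
    exact le_add_of_nonneg_right zero_le
  obtain ⟨hHUp, hHell⟩ := hD.up_iSup Sn (fun n => (hSnUp n).1) hSmono
  refine le_trans (mustar_le hHUp ?_) ?_
  · intro x hx
    obtain ⟨i, hi⟩ := mem_iUnion.mp hx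
    calc (1 : ℝ≥0∞) ≤ h i x := (hq i).2 x hi
      _ ≤ Sn i x := by
          refine Finset.single_le_sum (f := fun j => h j x) (fun j _ => zero_le) ?_
          simp
      _ ≤ ⨆ n, Sn n x := le_iSup (fun n => Sn n x) i
  · rw [hHell]
    refine iSup_le fun n => ?_
    rw [(hSnUp n).2]
    calc ∑ i ∈ Finset.range (n + 1), ell F L (h i)
        ≤ ∑ i ∈ Finset.range (n + 1), (mustar F L (A i) + (ε : ℝ≥0∞) / 2 ^ (i + 1)) :=
          Finset.sum_le_sum fun i _ => hle i
      _ = (∑ i ∈ Finset.range (n + 1), mustar F L (A i))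
            + ∑ i ∈ Finset.range (n + 1), (ε : ℝ≥0∞) / 2 ^ (i + 1) := Finset.sum_add_distrib
      _ ≤ (∑' i, mustar F L (A i)) + ε :=
          add_le_add (ENNReal.sum_le_tsum _) (geom_sum_le _ _)

/-! ### continuity from below of mustar -/

def maxSeqE (φ : ℕ → X → ℝ≥0∞) : ℕ → X → ℝ≥0∞
  | 0 => φ 0
  | k + 1 => fun x => max (maxSeqE φ k x) (φ (k + 1) x)

lemma le_maxSeqE (φ : ℕ → X → ℝ≥0∞) (k : ℕ) (x : X) : φ k x ≤ maxSeqE φ k x := by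
  cases k with
  | zero => exact le_rfl
  | succ k => exact le_max_right _ _

lemma maxSeqE_mono (φ : ℕ → X → ℝ≥0∞) (k : ℕ) (x : X) :
    maxSeqE φ k x ≤ maxSeqE φ (k + 1) x := le_max_left _ _

lemma Daniell.maxSeqE_up (hD : Daniell F L) {φ : ℕ → X → ℝ≥0∞} (hφ : ∀ j, φ j ∈ Up F) (k : ℕ) :
    maxSeqE φ k ∈ Up F := by
  induction k with
  | zero => exact hφ 0
  | succ k ih => exact hD.up_max ih (hφ (k + 1))

lemma Daniell.mustar_iUnion_mono (hD : Daniell F L) (A : ℕ → Set X) (hA : ∀ n, A n ⊆ A (n + 1)) :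
    mustar F L (⋃ n, A n) ≤ ⨆ n, mustar F L (A n) := by
  rcases eq_or_ne (⨆ n, mustar F L (A n)) ∞ with htop | htop
  · rw [htop]; exact le_top
  refine ENNReal.le_of_forall_pos_le_add fun ε hε hfin => ?_
  have hfin' : ∀ n, mustar F L (A n) ≠ ∞ := fun n =>
    ((le_iSup (fun n => mustar F L (A n)) n).trans_lt hfin.lt_top).ne
  have hch : ∀ n : ℕ, ∃ h, (h ∈ Up F ∧ ∀ x ∈ A n, 1 ≤ h x) ∧
      ell F L h ≤ mustar F L (A n) + (ε : ℝ≥0∞) / 2 ^ (n + 1) := by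
    intro n
    have hpos : ((ε : ℝ≥0∞) / 2 ^ (n + 1)) ≠ 0 := by
      simp [ENNReal.div_eq_zero_iff, hε.ne']
    obtain ⟨h, hqh, hlt⟩ := mustar_lt_iff.mp (ENNReal.lt_add_right (hfin' n) hpos)
    exact ⟨h, hqh, hlt.le⟩
  choose h hq hle using hch
  set k : ℕ → X → ℝ≥0∞ := maxSeqE h with hk
  have hkUp : ∀ n, k n ∈ Up F := hD.maxSeqE_up fun j => (hq j).1
  have hk1 : ∀ n, ∀ x ∈ A n, 1 ≤ k n x := fun n x hx =>
    le_trans ((hq n).2 x hx) (le_maxSeqE h n x)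
  -- the key inductive bound
  have hbound : ∀ n, ell F L (k n) ≤ mustar F L (A n)
      + ∑ i ∈ Finset.range (n + 1), (ε : ℝ≥0∞) / 2 ^ (i + 1) := by
    intro n
    induction n with
    | zero => simpa [hk, maxSeqE] using hle 0
    | succ n ih =>
      have hkey := hD.ell_max_add_min (hkUp n) (hq (n + 1)).1
      have hmin : mustar F L (A n) ≤ ell F L (fun x => min (k n x) (h (n + 1) x)) := by
        refine mustar_le (hD.up_min (hkUp n) (hq (n + 1)).1) fun x hx => ?_
        exact le_min (hk1 n x hx) ((hq (n + 1)).2 x (hA n hx))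
      have hstep : ell F L (k (n + 1)) + mustar F L (A n)
          ≤ (mustar F L (A (n + 1)) + ∑ i ∈ Finset.range (n + 2), (ε : ℝ≥0∞) / 2 ^ (i + 1))
            + mustar F L (A n) := by
        calc ell F L (k (n + 1)) + mustar F L (A n)
            ≤ ell F L (fun x => max (k n x) (h (n + 1) x))
              + ell F L (fun x => min (k n x) (h (n + 1) x)) := add_le_add le_rfl hmin
          _ = ell F L (k n) + ell F L (h (n + 1)) := hkey
          _ ≤ (mustar F L (A n) + ∑ i ∈ Finset.range (n + 1), (ε : ℝ≥0∞) / 2 ^ (i + 1))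
              + (mustar F L (A (n + 1)) + (ε : ℝ≥0∞) / 2 ^ (n + 2)) := add_le_add ih (hle (n + 1))
          _ = (mustar F L (A (n + 1)) + ∑ i ∈ Finset.range (n + 2), (ε : ℝ≥0∞) / 2 ^ (i + 1))
              + mustar F L (A n) := by
              rw [Finset.sum_range_succ _ (n + 1)]
              ring
      exact (ENNReal.add_le_add_iff_right (hfin' n)).mp hstep
  obtain ⟨hKUp, hKell⟩ := hD.up_iSup k hkUp (maxSeqE_mono h)
  refine le_trans (mustar_le hKUp fun x hx => ?_) ?_
  · obtain ⟨n, hn⟩ := mem_iUnion.mp hx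
    exact le_trans (hk1 n x hn) (le_iSup (fun n => k n x) n)
  · rw [hKell]
    refine iSup_le fun n => ?_
    refine le_trans (hbound n) ?_
    exact add_le_add (le_iSup (fun n => mustar F L (A n)) n) (geom_sum_le _ _)

/-! ### the splitting inequality and measurability -/

lemma Daniell.ramp_mem (hD : Daniell F L) {f : X → ℝ} (hf : f ∈ F) {s t : ℝ}
    (hs : 0 ≤ s) (hst : s ≤ t) :
    (fun x => (t - s)⁻¹ * (min (f x) t - min (f x) s)) ∈ F := by
  have h1 : (fun x => min (f x) t) ∈ F := hD.infc t (hs.trans hst) f hf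
  have h2 : (fun x => min (f x) s) ∈ F := hD.infc s hs f hf
  have h3 := hD.sub _ h2 _ h1 fun x => min_le_min le_rfl hst
  have h4 := hD.scal ((t - s)⁻¹) (inv_nonneg.mpr (by linarith)) _ h3
  convert h4 using 1
  try ext x
  try simp [Pi.smul_apply]

lemma Daniell.mustar_split (hD : Daniell F L) {f : X → ℝ} (hf : f ∈ F)
    (hfn : ∀ x, 0 ≤ f x) {s t : ℝ} (hs : 0 < s) (hst : s < t) (A : Set X) :
    mustar F L (A ∩ {x | t ≤ f x}) + mustar F L (A ∩ {x | f x ≤ s}) ≤ mustar F L A := by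
  refine le_iInf₂ fun h hh => ?_
  obtain ⟨⟨g, hg⟩, h1⟩ := hh
  have hts : (0:ℝ) < t - s := by linarith
  set u : X → ℝ := fun x => (t - s)⁻¹ * (min (f x) t - min (f x) s) with hu
  have huF : u ∈ F := hD.ramp_mem hf hs.le hst.le
  have hmm : ∀ x, min (f x) s ≤ min (f x) t := fun x => min_le_min le_rfl hst.le
  have hun : ∀ x, 0 ≤ u x := fun x =>
    mul_nonneg (inv_nonneg.mpr hts.le) (sub_nonneg.mpr (hmm x))
  have hu1 : ∀ x, t ≤ f x → u x = 1 := by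
    intro x hx
    rw [hu]
    simp only [min_eq_right hx, min_eq_right (by linarith : f x ≥ s)]
    field_simp
  have hu0 : ∀ x, f x ≤ s → u x = 0 := by
    intro x hx
    rw [hu]
    simp only [min_eq_left (by linarith : f x ≤ t), min_eq_left hx]
    ring
  have rep1 : IsRep F (fun n x => min (g n x) (u x))
      (fun x => min (h x) (ENNReal.ofReal (u x))) := hD.isRep_min hg (isRep_const huF hun)
  have rep2 := hD.isRep_sub hg huF hun
  have hells : ell F L (fun x => min (h x) (ENNReal.ofReal (u x)))
      + ell F L (fun x => h x - ENNReal.ofReal (u x)) = ell F L h := by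
    rw [hD.ell_rep rep1, hD.ell_rep rep2, hD.ell_rep hg,
      hD.iSup_ofReal_L rep1.mem rep2.mem rep1.mono rep2.mono rep1.nonneg rep2.nonneg]
    refine iSup_congr fun n => ?_
    congr 1
    have hsplit : (fun x => min (g n x) (u x)) + (g n - fun x => min (g n x) (u x)) = g n := by
      ext x; simp
    have := hD.Ladd _ (hD.inf _ (hg.mem n) _ huF) _ (rep2.mem n)
    rw [hsplit] at this
    exact this.symm
  calc mustar F L (A ∩ {x | t ≤ f x}) + mustar F L (A ∩ {x | f x ≤ s})
      ≤ ell F L (fun x => min (h x) (ENNReal.ofReal (u x)))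
        + ell F L (fun x => h x - ENNReal.ofReal (u x)) := by
        refine add_le_add (mustar_le ⟨_, rep1⟩ fun x hx => ?_) (mustar_le ⟨_, rep2⟩ fun x hx => ?_)
        · rw [hu1 x hx.2]
          simp only [ENNReal.ofReal_one]
          exact le_min (h1 x hx.1) le_rfl
        · rw [hu0 x hx.2]
          simpa using h1 x hx.1
    _ = ell F L h := hells

noncomputable def Daniell.outer (hD : Daniell F L) : OuterMeasure X where
  measureOf := mustar F L
  empty := hD.mustar_empty
  mono := fun hs => mustar_mono hs
  iUnion_nat := fun s _ => hD.mustar_iUnion_le s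

@[simp] lemma Daniell.outer_apply (hD : Daniell F L) (A : Set X) :
    hD.outer A = mustar F L A := rfl

lemma Daniell.isCara_ge (hD : Daniell F L) {f : X → ℝ} (hf : f ∈ F)
    (hfn : ∀ x, 0 ≤ f x) {t : ℝ} (ht : 0 < t) :
    MeasurableSet[hD.outer.caratheodory] {x | t ≤ f x} := by
  rw [OuterMeasure.isCaratheodory_iff_le]
  intro A
  set s : ℕ → ℝ := fun n => t - t / (n + 2) with hsdef
  have hs_pos : ∀ n : ℕ, 0 < s n := by
    intro n
    have h1 : t / (n + 2) < t := by
      rw [div_lt_iff₀ (by positivity)]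
      nlinarith
    simpa [hsdef] using sub_pos.mpr h1
  have hs_lt : ∀ n : ℕ, s n < t := by
    intro n
    have : 0 < t / ((n : ℝ) + 2) := by positivity
    simp only [hsdef]; linarith
  have hs_mono : ∀ n : ℕ, s n ≤ s (n + 1) := by
    intro n
    have : t / ((n : ℝ) + 1 + 2) ≤ t / ((n : ℝ) + 2) := by
      apply div_le_div_of_nonneg_left ht.le (by positivity) (by linarith)
    simp only [hsdef]
    push_cast
    linarith
  have hcover : A \ {x | t ≤ f x} = ⋃ n, A ∩ {x | f x ≤ s n} := by
    ext x
    simp only [mem_diff, mem_setOf_eq, not_le, mem_iUnion, mem_inter_iff]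
    constructor
    · rintro ⟨hxA, hxf⟩
      obtain ⟨n, hn⟩ := exists_nat_ge (t / (t - f x))
      refine ⟨n, hxA, ?_⟩
      have htf : 0 < t - f x := by linarith
      have : t ≤ (t - f x) * ((n : ℝ) + 2) := by
        rw [div_le_iff₀ htf] at hn
        nlinarith
      have h2 : t / ((n : ℝ) + 2) ≤ t - f x := by
        rw [div_le_iff₀ (by positivity)]
        linarith [this]
      simp only [hsdef]
      linarith
    · rintro ⟨n, hxA, hxs⟩
      exact ⟨hxA, lt_of_le_of_lt hxs (hs_lt n)⟩
  calc hD.outer (A ∩ {x | t ≤ f x}) + hD.outer (A \ {x | t ≤ f x})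
      ≤ mustar F L (A ∩ {x | t ≤ f x}) + ⨆ n, mustar F L (A ∩ {x | f x ≤ s n}) := by
        refine add_le_add le_rfl ?_
        rw [Daniell.outer_apply, hcover]
        exact hD.mustar_iUnion_mono _ fun n =>
          inter_subset_inter le_rfl fun x hx => le_trans hx (hs_mono n)
    _ = ⨆ n, (mustar F L (A ∩ {x | t ≤ f x}) + mustar F L (A ∩ {x | f x ≤ s n})) :=
        ENNReal.add_iSup _
    _ ≤ mustar F L A := iSup_le fun n => hD.mustar_split hf hfn (hs_pos n) (hs_lt n) A

lemma Daniell.posPart_mem (hD : Daniell F L) {f : X → ℝ} (hf : f ∈ F) :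
    (fun x => max (f x) 0) ∈ F := by
  have hmin : (fun x => min (f x) 0) ∈ F := hD.infc 0 le_rfl f hf
  have h := hD.sub _ hmin _ hf fun x => min_le_left _ _
  convert h using 1
  ext x
  simp only [Pi.sub_apply]
  rcases le_total (f x) 0 with hle | hle
  · rw [max_eq_right hle, min_eq_left hle]; ring
  · rw [max_eq_left hle, min_eq_right hle]; ring

lemma Daniell.negPart_mem (hD : Daniell F L) {f : X → ℝ} (hf : f ∈ F) :
    (fun x => max (-f x) 0) ∈ F := by
  have hmin : (fun x => min (f x) 0) ∈ F := hD.infc 0 le_rfl f hf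
  have h := hD.sub _ hmin _ hD.zero_mem fun x => min_le_right _ _
  convert h using 1
  ext x
  simp only [Pi.sub_apply, Pi.zero_apply]
  rcases le_total (f x) 0 with hle | hle
  · rw [max_eq_left (by linarith), min_eq_left hle]; ring
  · rw [max_eq_right (by linarith), min_eq_right hle]; ring

lemma Daniell.generateFrom_le_cara (hD : Daniell F L) :
    MeasurableSpace.generateFrom {A : Set X | ∃ f ∈ F, ∃ a : ℝ, A = f ⁻¹' Set.Iic a}
      ≤ hD.outer.caratheodory := by
  refine MeasurableSpace.generateFrom_le ?_
  rintro A ⟨f, hf, a, rfl⟩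
  rcases le_or_gt 0 a with ha | ha
  · have heq : f ⁻¹' Set.Iic a = (⋃ n : ℕ, {x | a + 1 / (n + 1) ≤ max (f x) 0})ᶜ := by
      ext x
      simp only [mem_preimage, mem_Iic, mem_compl_iff, mem_iUnion, mem_setOf_eq, not_exists, not_le]
      constructor
      · intro hxa n
        have : max (f x) 0 ≤ a := max_le hxa ha
        have hn : (0:ℝ) < 1 / ((n:ℝ) + 1) := by positivity
        linarith
      · intro hall
        by_contra hcon
        push_neg at hcon
        obtain ⟨n, hn⟩ := exists_nat_ge (1 / (f x - a))
        have hfa : 0 < f x - a := by linarith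
        have h1 : 1 / ((n:ℝ) + 1) ≤ f x - a := by
          rw [div_le_iff₀ (by positivity)]
          rw [div_le_iff₀ hfa] at hn
          nlinarith
        have := hall n
        have : a + 1 / ((n:ℝ) + 1) ≤ max (f x) 0 := le_trans (by linarith) (le_max_left _ _)
        linarith [hall n]
    rw [heq]
    refine MeasurableSet.compl (MeasurableSet.iUnion fun n => ?_)
    exact hD.isCara_ge (hD.posPart_mem hf) (fun x => le_max_right _ _) (by positivity)
  · have heq : f ⁻¹' Set.Iic a = {x | -a ≤ max (-f x) 0} := by
      ext x
      simp only [mem_preimage, mem_Iic, mem_setOf_eq]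
      constructor
      · intro hxa
        exact le_trans (by linarith) (le_max_left _ _)
      · intro hx
        rcases le_total (-f x) 0 with hle | hle
        · rw [max_eq_right hle] at hx; linarith
        · rw [max_eq_left hle] at hx; linarith
    rw [heq]
    exact hD.isCara_ge (hD.negPart_mem hf) (fun x => le_max_right _ _) (by linarith)

/-! ### comparison of mustar with L via ramps -/

lemma Daniell.ofReal_L_le_mustar (hD : Daniell F L) {g : X → ℝ} (hg : g ∈ F)
    (hgn : ∀ x, 0 ≤ g x) {A : Set X} (hg1 : ∀ x, g x ≤ 1) (hg0 : ∀ x, x ∉ A → g x = 0) :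
    ENNReal.ofReal (L g) ≤ mustar F L A := by
  refine le_iInf₂ fun h hh => le_ell hg hgn fun x => ?_
  by_cases hx : x ∈ A
  · refine le_trans (ENNReal.ofReal_le_ofReal (hg1 x)) ?_
    rw [ENNReal.ofReal_one]
    exact hh.2 x hx
  · simp [hg0 x hx]

lemma Daniell.mustar_le_ofReal_L (hD : Daniell F L) {g : X → ℝ} (hg : g ∈ F)
    (hgn : ∀ x, 0 ≤ g x) {A : Set X} (h1 : ∀ x ∈ A, 1 ≤ g x) :
    mustar F L A ≤ ENNReal.ofReal (L g) := by
  refine le_trans (mustar_le ⟨_, isRep_const hg hgn⟩ fun x hx => ?_)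
    (le_of_eq (hD.ell_ofReal hg hgn))
  calc (1:ℝ≥0∞) = ENNReal.ofReal 1 := ENNReal.ofReal_one.symm
    _ ≤ ENNReal.ofReal (g x) := ENNReal.ofReal_le_ofReal (h1 x hx)

section pieces
variable {f : X → ℝ} {δ : ℝ}

/-- the cut-off functions -/
private def qcut (f : X → ℝ) (δ : ℝ) (k : ℕ) : X → ℝ := fun x => min (f x) (k * δ)

lemma Daniell.qcut_mem (hD : Daniell F L) (hf : f ∈ F) (hδ : 0 < δ) (k : ℕ) :
    qcut f δ k ∈ F := hD.infc _ (by positivity) f hf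

lemma qcut_mono (hδ : 0 < δ) (k : ℕ) (x : X) : qcut f δ k x ≤ qcut f δ (k + 1) x := by
  refine min_le_min le_rfl ?_
  have : (k:ℝ) ≤ (k:ℝ) + 1 := by linarith
  push_cast
  nlinarith

lemma qcut_nonneg (hfn : ∀ x, 0 ≤ f x) (hδ : 0 < δ) (k : ℕ) (x : X) : 0 ≤ qcut f δ k x :=
  le_min (hfn x) (by positivity)

lemma qcut_zero (hfn : ∀ x, 0 ≤ f x) : qcut f δ 0 = 0 := by
  ext x; simp [qcut, min_eq_right (hfn x)]

lemma Daniell.pcut_mem (hD : Daniell F L) (hf : f ∈ F) (hδ : 0 < δ) (k : ℕ) :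
    qcut f δ (k + 1) - qcut f δ k ∈ F :=
  hD.sub _ (hD.qcut_mem hf hδ k) _ (hD.qcut_mem hf hδ (k + 1)) (qcut_mono hδ k)

lemma pcut_nonneg (hδ : 0 < δ) (k : ℕ) (x : X) : 0 ≤ (qcut f δ (k + 1) - qcut f δ k) x := by
  simp only [Pi.sub_apply]
  linarith [qcut_mono (f := f) hδ k x]

lemma pcut_le (hδ : 0 < δ) (k : ℕ) (x : X) : (qcut f δ (k + 1) - qcut f δ k) x ≤ δ := by
  simp only [Pi.sub_apply, qcut]
  push_cast
  rcases le_total (f x) ((k:ℝ) * δ) with hle | hle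
  · rw [min_eq_left (by linarith), min_eq_left hle]; linarith
  · rw [min_eq_right hle]
    rcases le_total (f x) (((k:ℝ) + 1) * δ) with hle2 | hle2
    · rw [min_eq_left hle2]; linarith
    · rw [min_eq_right hle2]; linarith

lemma pcut_eq_delta (hδ : 0 < δ) (k : ℕ) (x : X) (hx : ((k:ℝ) + 1) * δ ≤ f x) :
    (qcut f δ (k + 1) - qcut f δ k) x = δ := by
  simp only [Pi.sub_apply, qcut]
  push_cast
  rw [min_eq_right hx, min_eq_right (by nlinarith)]
  ring

lemma pcut_eq_zero (hδ : 0 < δ) (k : ℕ) (x : X) (hx : f x ≤ (k:ℝ) * δ) :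
    (qcut f δ (k + 1) - qcut f δ k) x = 0 := by
  simp only [Pi.sub_apply, qcut]
  push_cast
  rw [min_eq_left hx, min_eq_left (by nlinarith)]
  ring

/-- per-piece upper bound -/
lemma Daniell.piece_le (hD : Daniell F L) (hf : f ∈ F) (hfn : ∀ x, 0 ≤ f x) (hδ : 0 < δ)
    (k : ℕ) : ENNReal.ofReal (L (qcut f δ (k + 1) - qcut f δ k))
      ≤ ENNReal.ofReal δ * mustar F L {x | (k:ℝ) * δ < f x} := by
  have hpF : qcut f δ (k + 1) - qcut f δ k ∈ F := hD.pcut_mem hf hδ k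
  have hgF : δ⁻¹ • (qcut f δ (k + 1) - qcut f δ k) ∈ F := hD.scal _ (by positivity) _ hpF
  have hgn : ∀ x, 0 ≤ (δ⁻¹ • (qcut f δ (k + 1) - qcut f δ k)) x := fun x =>
    mul_nonneg (by positivity) (pcut_nonneg hδ k x)
  have hg1 : ∀ x, (δ⁻¹ • (qcut f δ (k + 1) - qcut f δ k)) x ≤ 1 := fun x => by
    have h := pcut_le (f := f) hδ k x
    simp only [Pi.smul_apply, smul_eq_mul]
    rw [← inv_mul_cancel₀ hδ.ne']
    exact mul_le_mul_of_nonneg_left h (by positivity)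
  have hg0 : ∀ x, x ∉ {x | (k:ℝ) * δ < f x} →
      (δ⁻¹ • (qcut f δ (k + 1) - qcut f δ k)) x = 0 := fun x hx => by
    simp only [mem_setOf_eq, not_lt] at hx
    simp only [Pi.smul_apply, smul_eq_mul]
    rw [pcut_eq_zero hδ k x hx, mul_zero]
  have h8a := hD.ofReal_L_le_mustar hgF hgn hg1 hg0
  have hLp : L (qcut f δ (k + 1) - qcut f δ k)
      = δ * L (δ⁻¹ • (qcut f δ (k + 1) - qcut f δ k)) := by
    rw [hD.Lscal _ (by positivity) _ hpF]
    field_simp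
  rw [hLp, ENNReal.ofReal_mul hδ.le]
  exact mul_le_mul_of_nonneg_left h8a zero_le

/-- per-piece lower bound -/
lemma Daniell.le_piece (hD : Daniell F L) (hf : f ∈ F) (hfn : ∀ x, 0 ≤ f x) (hδ : 0 < δ)
    (k : ℕ) : ENNReal.ofReal δ * mustar F L {x | ((k:ℝ) + 1) * δ ≤ f x}
      ≤ ENNReal.ofReal (L (qcut f δ (k + 1) - qcut f δ k)) := by
  have hpF : qcut f δ (k + 1) - qcut f δ k ∈ F := hD.pcut_mem hf hδ k
  have hgF : δ⁻¹ • (qcut f δ (k + 1) - qcut f δ k) ∈ F := hD.scal _ (by positivity) _ hpF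
  have hgn : ∀ x, 0 ≤ (δ⁻¹ • (qcut f δ (k + 1) - qcut f δ k)) x := fun x =>
    mul_nonneg (by positivity) (pcut_nonneg hδ k x)
  have h1 : ∀ x ∈ {x | ((k:ℝ) + 1) * δ ≤ f x},
      1 ≤ (δ⁻¹ • (qcut f δ (k + 1) - qcut f δ k)) x := fun x hx => by
    simp only [Pi.smul_apply, smul_eq_mul]
    rw [pcut_eq_delta hδ k x hx, inv_mul_cancel₀ hδ.ne']
  have h8b := hD.mustar_le_ofReal_L hgF hgn h1
  have hLp : L (qcut f δ (k + 1) - qcut f δ k)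
      = δ * L (δ⁻¹ • (qcut f δ (k + 1) - qcut f δ k)) := by
    rw [hD.Lscal _ (by positivity) _ hpF]
    field_simp
  rw [hLp, ENNReal.ofReal_mul hδ.le]
  exact mul_le_mul_of_nonneg_left h8b zero_le

lemma Daniell.sum_L_pcut (hD : Daniell F L) (hf : f ∈ F) (hfn : ∀ x, 0 ≤ f x) (hδ : 0 < δ)
    (n : ℕ) : ∑ k ∈ Finset.range n, L (qcut f δ (k + 1) - qcut f δ k) = L (qcut f δ n) := by
  have : ∀ k, L (qcut f δ (k + 1) - qcut f δ k) = L (qcut f δ (k + 1)) - L (qcut f δ k) :=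
    fun k => hD.Lsub (hD.qcut_mem hf hδ k) (hD.qcut_mem hf hδ (k + 1)) (qcut_mono hδ k)
  simp_rw [this]
  rw [Finset.sum_range_sub (f := fun k => L (qcut f δ k))]
  rw [qcut_zero hfn, hD.Lzero, sub_zero]

/-- summed upper bound (S1) -/
lemma Daniell.sum_mustar_le (hD : Daniell F L) (hf : f ∈ F) (hfn : ∀ x, 0 ≤ f x)
    (hδ : 0 < δ) (n : ℕ) :
    ∑ k ∈ Finset.range n, ENNReal.ofReal δ * mustar F L {x | ((k:ℝ) + 1) * δ ≤ f x}
      ≤ ENNReal.ofReal (L f) := by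
  calc ∑ k ∈ Finset.range n, ENNReal.ofReal δ * mustar F L {x | ((k:ℝ) + 1) * δ ≤ f x}
      ≤ ∑ k ∈ Finset.range n, ENNReal.ofReal (L (qcut f δ (k + 1) - qcut f δ k)) :=
        Finset.sum_le_sum fun k _ => hD.le_piece hf hfn hδ k
    _ = ENNReal.ofReal (∑ k ∈ Finset.range n, L (qcut f δ (k + 1) - qcut f δ k)) :=
        (ENNReal.ofReal_sum_of_nonneg fun k _ =>
          hD.Lnn (hD.pcut_mem hf hδ k) (pcut_nonneg hδ k)).symm
    _ = ENNReal.ofReal (L (qcut f δ n)) := by rw [hD.sum_L_pcut hf hfn hδ n]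
    _ ≤ ENNReal.ofReal (L f) := ENNReal.ofReal_le_ofReal
        (hD.Lmono _ (hD.qcut_mem hf hδ n) _ hf fun x => min_le_left _ _)

/-- summed lower bound (S2) -/
lemma Daniell.ofReal_sub_le_sum (hD : Daniell F L) (hf : f ∈ F) (hfn : ∀ x, 0 ≤ f x)
    (hδ : 0 < δ) (n : ℕ) :
    ENNReal.ofReal (L (qcut f δ (n + 1)) - L (qcut f δ 1))
      ≤ ∑ k ∈ Finset.range n, ENNReal.ofReal δ * mustar F L {x | ((k:ℝ) + 1) * δ < f x} := by
  have hsum : ∑ k ∈ Finset.range n, L (qcut f δ (k + 2) - qcut f δ (k + 1))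
      = L (qcut f δ (n + 1)) - L (qcut f δ 1) := by
    have : ∀ k, L (qcut f δ (k + 2) - qcut f δ (k + 1))
        = L (qcut f δ (k + 2)) - L (qcut f δ (k + 1)) := fun k =>
      hD.Lsub (hD.qcut_mem hf hδ (k + 1)) (hD.qcut_mem hf hδ (k + 2)) (qcut_mono hδ (k + 1))
    simp_rw [this]
    have h := Finset.sum_range_sub (f := fun k => L (qcut f δ (k + 1))) n
    norm_num at h ⊢
    convert h using 2 with k
  rw [← hsum, ENNReal.ofReal_sum_of_nonneg fun k _ =>
    hD.Lnn (hD.pcut_mem hf hδ (k + 1)) (pcut_nonneg hδ (k + 1))]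
  refine Finset.sum_le_sum fun k _ => ?_
  have := hD.piece_le hf hfn hδ (k + 1)
  refine le_trans this ?_
  push_cast
  exact le_rfl

end pieces

/-! ### the lintegral identity -/

lemma Daniell.lintegral_ofReal (hD : Daniell F L) [m : MeasurableSpace X]
    (hle : m ≤ hD.outer.caratheodory) (hmf : ∀ g ∈ F, Measurable g)
    {f : X → ℝ} (hf : f ∈ F) (hfn : ∀ x, 0 ≤ f x) :
    ∫⁻ x, ENNReal.ofReal (f x) ∂(hD.outer.toMeasure hle) = ENNReal.ofReal (L f) := by
  set μ := hD.outer.toMeasure hle with hμ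
  have hfm : Measurable f := hmf f hf
  have hmeaslt : ∀ t : ℝ, MeasurableSet {x | t < f x} := fun t => hfm measurableSet_Ioi
  have hμset : ∀ t : ℝ, μ {x | t < f x} = mustar F L {x | t < f x} := fun t =>
    MeasureTheory.toMeasure_apply _ hle (hmeaslt t)
  set G : ℝ → ℝ≥0∞ := fun t => μ {x | t < f x} with hG
  have hGanti : Antitone G := fun s t hst =>
    measure_mono fun x hx => lt_of_le_of_lt hst hx
  have hGmeas : Measurable G := hGanti.measurable
  have hlayer : ∫⁻ x, ENNReal.ofReal (f x) ∂μ = ∫⁻ t in Ioi 0, G t :=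
    lintegral_eq_lintegral_meas_lt μ (Eventually.of_forall hfn) hfm.aemeasurable
  rw [hlayer]
  apply le_antisymm
  · -- upper bound
    have hstep : ∀ δ : ℝ, 0 < δ → ∫⁻ t in Ioi δ, G t ≤ ENNReal.ofReal (L f) := by
      intro δ hδ
      have hsub : Ioi δ ⊆ ⋃ j : ℕ, Ioc (((j:ℝ) + 1) * δ) (((j:ℝ) + 2) * δ) := by
        intro t ht
        simp only [mem_Ioi] at ht
        have hy : 0 < t / δ - 1 := by
          rw [sub_pos, lt_div_iff₀ hδ]; linarith
        set c := ⌈t / δ - 1⌉₊ with hc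
        have hc1 : 1 ≤ c := Nat.ceil_pos.mpr hy
        refine mem_iUnion.mpr ⟨c - 1, ?_⟩
        have hcast : ((c - 1 : ℕ) : ℝ) = (c : ℝ) - 1 := by
          push_cast [Nat.cast_sub hc1]; ring
        simp only [mem_Ioc, hcast]
        constructor
        · have h2 : (c : ℝ) < (t / δ - 1) + 1 := Nat.ceil_lt_add_one hy.le
          have : (c : ℝ) < t / δ := by linarith
          calc ((c:ℝ) - 1 + 1) * δ = (c:ℝ) * δ := by ring
            _ < t := by rw [← lt_div_iff₀ hδ] at *; linarith [this]
        · have h3 : t / δ - 1 ≤ (c : ℝ) := Nat.le_ceil _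
          have : t / δ ≤ (c : ℝ) + 1 := by linarith
          calc t = t / δ * δ := by field_simp
            _ ≤ ((c:ℝ) + 1) * δ := by
                exact mul_le_mul_of_nonneg_right this hδ.le
            _ = ((c:ℝ) - 1 + 2) * δ := by ring
      have hIj : ∀ j : ℕ, ∫⁻ t in Ioc (((j:ℝ) + 1) * δ) (((j:ℝ) + 2) * δ), G t
          ≤ ENNReal.ofReal δ * mustar F L {x | ((j:ℝ) + 1) * δ ≤ f x} := by
        intro j
        have hbound : ∀ t ∈ Ioc (((j:ℝ) + 1) * δ) (((j:ℝ) + 2) * δ),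
            G t ≤ mustar F L {x | ((j:ℝ) + 1) * δ ≤ f x} := by
          intro t ht
          rw [hG]
          simp only
          rw [hμset]
          exact mustar_mono fun x hx => le_of_lt (lt_trans ht.1 hx)
        calc ∫⁻ t in Ioc (((j:ℝ) + 1) * δ) (((j:ℝ) + 2) * δ), G t
            ≤ ∫⁻ _ in Ioc (((j:ℝ) + 1) * δ) (((j:ℝ) + 2) * δ),
              mustar F L {x | ((j:ℝ) + 1) * δ ≤ f x} :=
              setLIntegral_mono measurable_const hbound
          _ = mustar F L {x | ((j:ℝ) + 1) * δ ≤ f x}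
              * volume (Ioc (((j:ℝ) + 1) * δ) (((j:ℝ) + 2) * δ)) := setLIntegral_const _ _
          _ = ENNReal.ofReal δ * mustar F L {x | ((j:ℝ) + 1) * δ ≤ f x} := by
              rw [Real.volume_Ioc]
              rw [show ((j:ℝ) + 2) * δ - ((j:ℝ) + 1) * δ = δ by ring]
              ring
      calc ∫⁻ t in Ioi δ, G t
          ≤ ∫⁻ t in ⋃ j : ℕ, Ioc (((j:ℝ) + 1) * δ) (((j:ℝ) + 2) * δ), G t :=
            lintegral_mono_set hsub
        _ ≤ ∑' j : ℕ, ∫⁻ t in Ioc (((j:ℝ) + 1) * δ) (((j:ℝ) + 2) * δ), G t :=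
            lintegral_iUnion_le _ _
        _ ≤ ∑' j : ℕ, ENNReal.ofReal δ * mustar F L {x | ((j:ℝ) + 1) * δ ≤ f x} :=
            ENNReal.tsum_le_tsum hIj
        _ ≤ ENNReal.ofReal (L f) := by
            rw [ENNReal.tsum_eq_iSup_nat]
            exact iSup_le fun n => hD.sum_mustar_le hf hfn hδ n
    -- pass to the limit δ → 0 using indicator functions
    have hids : ∀ n : ℕ, Measurable ((Ioi (1 / ((n:ℝ) + 1))).indicator G) := fun n =>
      hGmeas.indicator measurableSet_Ioi
    have hmono : Monotone fun n : ℕ => (Ioi (1 / ((n:ℝ) + 1))).indicator G := by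
      intro a b hab
      refine indicator_le_indicator_of_subset (fun t ht => ?_) (fun t => zero_le)
      simp only [mem_Ioi] at *
      refine lt_of_le_of_lt ?_ ht
      apply one_div_le_one_div_of_le (by positivity)
      exact_mod_cast Nat.add_le_add_right hab 1
    have hptw : ∀ t : ℝ, (Ioi (0:ℝ)).indicator G t
        = ⨆ n : ℕ, (Ioi (1 / ((n:ℝ) + 1))).indicator G t := by
      intro t
      rcases le_or_gt t 0 with ht | ht
      · rw [indicator_of_notMem (by simpa using ht)]
        symm
        simp only [ENNReal.iSup_eq_zero]
        intro n
        refine indicator_of_notMem ?_ _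
        simp only [mem_Ioi, not_lt]
        exact le_trans ht (by positivity)
      · rw [indicator_of_mem (mem_Ioi.mpr ht)]
        obtain ⟨n, hn⟩ := exists_nat_one_div_lt ht
        apply le_antisymm
        · refine le_trans ?_ (le_iSup _ n)
          rw [indicator_of_mem (mem_Ioi.mpr hn)]
        · refine iSup_le fun k => ?_
          exact indicator_le_self' (fun _ _ => zero_le) t
    calc ∫⁻ t in Ioi (0:ℝ), G t = ∫⁻ t, (Ioi (0:ℝ)).indicator G t := by
          rw [lintegral_indicator measurableSet_Ioi]
      _ = ∫⁻ t, ⨆ n : ℕ, (Ioi (1 / ((n:ℝ) + 1))).indicator G t := by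
          congr 1; ext t; exact hptw t
      _ = ⨆ n : ℕ, ∫⁻ t, (Ioi (1 / ((n:ℝ) + 1))).indicator G t := lintegral_iSup hids hmono
      _ ≤ ENNReal.ofReal (L f) := by
          refine iSup_le fun n => ?_
          rw [lintegral_indicator measurableSet_Ioi]
          exact hstep _ (by positivity)
  · -- lower bound
    have hstep : ∀ δ : ℝ, 0 < δ →
        ENNReal.ofReal (L f - L (qcut f δ 1)) ≤ ∫⁻ t in Ioi 0, G t := by
      intro δ hδ
      have hlow : ∀ n : ℕ, ∑ k ∈ Finset.range n,
          ENNReal.ofReal δ * G (((k:ℝ) + 1) * δ) ≤ ∫⁻ t in Ioc 0 ((n:ℝ) * δ), G t := by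
        intro n
        induction n with
        | zero => simp
        | succ n ih =>
          rw [Finset.sum_range_succ]
          have hseg : ENNReal.ofReal δ * G (((n:ℝ) + 1) * δ)
              ≤ ∫⁻ t in Ioc ((n:ℝ) * δ) (((n:ℝ) + 1) * δ), G t := by
            have hc : ∀ t ∈ Ioc ((n:ℝ) * δ) (((n:ℝ) + 1) * δ),
                G (((n:ℝ) + 1) * δ) ≤ G t := fun t ht => hGanti ht.2
            calc ENNReal.ofReal δ * G (((n:ℝ) + 1) * δ)
                = G (((n:ℝ) + 1) * δ) * volume (Ioc ((n:ℝ) * δ) (((n:ℝ) + 1) * δ)) := by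
                  rw [Real.volume_Ioc, show ((n:ℝ) + 1) * δ - (n:ℝ) * δ = δ by ring]
                  ring
              _ = ∫⁻ _ in Ioc ((n:ℝ) * δ) (((n:ℝ) + 1) * δ), G (((n:ℝ) + 1) * δ) :=
                  (setLIntegral_const _ _).symm
              _ ≤ ∫⁻ t in Ioc ((n:ℝ) * δ) (((n:ℝ) + 1) * δ), G t :=
                  setLIntegral_mono hGmeas hc
          calc (∑ k ∈ Finset.range n, ENNReal.ofReal δ * G (((k:ℝ) + 1) * δ))
                + ENNReal.ofReal δ * G (((n:ℝ) + 1) * δ)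
              ≤ (∫⁻ t in Ioc 0 ((n:ℝ) * δ), G t)
                + ∫⁻ t in Ioc ((n:ℝ) * δ) (((n:ℝ) + 1) * δ), G t := add_le_add ih hseg
            _ = ∫⁻ t in Ioc 0 ((n:ℝ) * δ) ∪ Ioc ((n:ℝ) * δ) (((n:ℝ) + 1) * δ), G t :=
                (lintegral_union measurableSet_Ioc (Ioc_disjoint_Ioc_of_le le_rfl)).symm
            _ = ∫⁻ t in Ioc 0 (((n:ℝ) + 1) * δ), G t := by
                rw [Ioc_union_Ioc_eq_Ioc (by positivity) (by nlinarith)]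
            _ = ∫⁻ t in Ioc 0 ((((n:ℕ) + 1 : ℕ) : ℝ) * δ), G t := by norm_cast
      have hlim : ∀ n : ℕ, ENNReal.ofReal (L (qcut f δ (n + 1)) - L (qcut f δ 1))
          ≤ ∫⁻ t in Ioi 0, G t := by
        intro n
        refine le_trans (hD.ofReal_sub_le_sum hf hfn hδ n) ?_
        have heqG : ∀ k : ℕ, mustar F L {x | ((k:ℝ) + 1) * δ < f x} = G (((k:ℝ) + 1) * δ) :=
          fun k => (hμset _).symm
        simp_rw [heqG]
        refine le_trans (hlow n) ?_
        exact lintegral_mono_set fun t ht => ht.1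
      -- n → ∞
      have htendL : Tendsto (fun n : ℕ => L (qcut f δ (n + 1))) atTop (nhds (L f)) := by
        refine hD.Lcont (fun n => qcut f δ (n + 1)) f (fun n => hD.qcut_mem hf hδ (n + 1)) hf
          (fun n x => qcut_mono hδ (n + 1) x) (fun x => ?_)
        refine tendsto_atTop_of_eventually_const (i₀ := ⌈f x / δ⌉₊) fun n hn => ?_
        have h1 : f x / δ ≤ (⌈f x / δ⌉₊ : ℝ) := Nat.le_ceil _
        have h2 : ((⌈f x / δ⌉₊ : ℕ) : ℝ) ≤ (n : ℝ) := Nat.cast_le.mpr hn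
        have h3 : f x ≤ ((n + 1 : ℕ) : ℝ) * δ := by
          rw [div_le_iff₀ hδ] at h1
          push_cast
          nlinarith
        simp only [qcut]
        rw [min_eq_left h3]
      have htend : Tendsto (fun n : ℕ => ENNReal.ofReal (L (qcut f δ (n + 1)) - L (qcut f δ 1)))
          atTop (nhds (ENNReal.ofReal (L f - L (qcut f δ 1)))) := by
        refine (ENNReal.continuous_ofReal.tendsto _).comp ?_
        exact (htendL.sub tendsto_const_nhds)
      exact le_of_tendsto htend (Eventually.of_forall hlim)
    -- δ → 0
    have hq1tend : Tendsto (fun m : ℕ => L (qcut f (1 / ((m:ℝ) + 1)) 1)) atTop (nhds 0) := by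
      have hδm : ∀ m : ℕ, (0:ℝ) < 1 / ((m:ℝ) + 1) := fun m => by positivity
      have hqval : ∀ (m : ℕ) (x : X), qcut f (1 / ((m:ℝ) + 1)) 1 x
          = min (f x) (1 / ((m:ℝ) + 1)) := by
        intro m x; simp [qcut]
      have hrmem : ∀ m : ℕ, f - qcut f (1 / ((m:ℝ) + 1)) 1 ∈ F := fun m =>
        hD.sub _ (hD.qcut_mem hf (hδm m) 1) _ hf fun x => min_le_left _ _
      have hmono : ∀ (m : ℕ) (x : X), (f - qcut f (1 / ((m:ℝ) + 1)) 1) x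
          ≤ (f - qcut f (1 / ((↑(m + 1):ℝ) + 1)) 1) x := by
        intro m x
        simp only [Pi.sub_apply, hqval]
        have h1 : (1:ℝ) / ((↑(m + 1):ℝ) + 1) ≤ 1 / ((m:ℝ) + 1) := by
          apply one_div_le_one_div_of_le (by positivity)
          push_cast; linarith
        have h2 := min_le_min (le_refl (f x)) h1
        linarith [h2]
      have htendr : ∀ x : X, Tendsto (fun m : ℕ => (f - qcut f (1 / ((m:ℝ) + 1)) 1) x) atTop
          (nhds (f x)) := by
        intro x
        simp only [Pi.sub_apply, hqval]
        have h0 : Tendsto (fun m : ℕ => min (f x) (1 / ((m:ℝ) + 1))) atTop (nhds 0) :=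
          squeeze_zero (fun m => le_min (hfn x) (hδm m).le)
            (fun m => min_le_right _ _) tendsto_one_div_add_atTop_nhds_zero_nat
        simpa using tendsto_const_nhds.sub h0
      have hLr := hD.Lcont (fun m => f - qcut f (1 / ((m:ℝ) + 1)) 1) f hrmem hf hmono htendr
      have hLreq : ∀ m : ℕ, L (f - qcut f (1 / ((m:ℝ) + 1)) 1)
          = L f - L (qcut f (1 / ((m:ℝ) + 1)) 1) := fun m =>
        hD.Lsub (hD.qcut_mem hf (hδm m) 1) hf fun x => min_le_left _ _
      simp_rw [hLreq] at hLr
      have := tendsto_const_nhds (x := L f) (f := atTop (α := ℕ)) |>.sub hLr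
      simpa using this
    have hfinal : Tendsto (fun m : ℕ => ENNReal.ofReal (L f - L (qcut f (1 / ((m:ℝ) + 1)) 1)))
        atTop (nhds (ENNReal.ofReal (L f))) := by
      refine (ENNReal.continuous_ofReal.tendsto _).comp ?_
      have := tendsto_const_nhds (x := L f) (f := atTop (α := ℕ)) |>.sub hq1tend
      simpa using this
    exact le_of_tendsto hfinal (Eventually.of_forall fun m => hstep _ (by positivity))

end Stmt19

open MeasureTheory Filter

theorem stmt19 {X : Type*} (F : Set (X → ℝ))
    (hscal : ∀ c : ℝ, 0 ≤ c → ∀ f ∈ F, c • f ∈ F)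
    (hadd : ∀ f ∈ F, ∀ g ∈ F, f + g ∈ F)
    (hinf : ∀ f ∈ F, ∀ g ∈ F, (fun x => min (f x) (g x)) ∈ F)
    (hinfc : ∀ c : ℝ, 0 ≤ c → ∀ f ∈ F, (fun x => min (f x) c) ∈ F)
    (hsub : ∀ f ∈ F, ∀ g ∈ F, (∀ x, f x ≤ g x) → g - f ∈ F)
    (L : (X → ℝ) → ℝ)
    (hLadd : ∀ f ∈ F, ∀ g ∈ F, L (f + g) = L f + L g)
    (hLscal : ∀ c : ℝ, 0 ≤ c → ∀ f ∈ F, L (c • f) = c * L f)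
    (hLmono : ∀ f ∈ F, ∀ g ∈ F, (∀ x, f x ≤ g x) → L f ≤ L g)
    (hLcont : ∀ (fn : ℕ → X → ℝ) (g : X → ℝ), (∀ i, fn i ∈ F) → g ∈ F →
      (∀ i x, fn i x ≤ fn (i + 1) x) →
      (∀ x, Tendsto (fun i => fn i x) atTop (nhds (g x))) →
      Tendsto (fun i => L (fn i)) atTop (nhds (L g)))
    [m : MeasurableSpace X]
    (hm : m = MeasurableSpace.generateFrom
      {A : Set X | ∃ f ∈ F, ∃ a : ℝ, A = f ⁻¹' Set.Iic a}) :
    ∃ μ : Measure X, ∀ f ∈ F, L f = ∫ x, f x ∂μ := by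
  rcases Set.eq_empty_or_nonempty F with hF | ⟨f₀, hf₀⟩
  · exact ⟨0, fun f hfF => absurd hfF (by simp [hF])⟩
  have hzero : (0 : X → ℝ) ∈ F := by
    have := hsub f₀ hf₀ f₀ hf₀ fun x => le_rfl
    simpa using this
  have hD : Stmt19.Daniell F L :=
    ⟨hzero, hscal, hadd, hinf, hinfc, hsub, hLadd, hLscal, hLmono, hLcont⟩
  have hlecara : m ≤ hD.outer.caratheodory := by
    rw [hm]; exact hD.generateFrom_le_cara
  have hmf : ∀ g ∈ F, Measurable g := by
    intro g hg
    apply measurable_of_Iic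
    intro a
    have h1 : MeasurableSet[MeasurableSpace.generateFrom
        {A : Set X | ∃ f ∈ F, ∃ a : ℝ, A = f ⁻¹' Set.Iic a}] (g ⁻¹' Set.Iic a) :=
      MeasurableSpace.measurableSet_generateFrom ⟨g, hg, a, rfl⟩
    rw [hm]
    exact h1
  set μ := hD.outer.toMeasure hlecara with hμdef
  refine ⟨μ, fun f hfF => ?_⟩
  set fp : X → ℝ := fun x => max (f x) 0 with hfp
  set fm : X → ℝ := fun x => max (-f x) 0 with hfm
  have hfpF : fp ∈ F := hD.posPart_mem hfF
  have hfmF : fm ∈ F := hD.negPart_mem hfF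
  have hfpn : ∀ x, 0 ≤ fp x := fun x => le_max_right _ _
  have hfmn : ∀ x, 0 ≤ fm x := fun x => le_max_right _ _
  have hdecomp : ∀ x, f x = fp x - fm x := by
    intro x
    rw [hfp, hfm]
    simp only
    rcases le_total (f x) 0 with hle | hle
    · rw [max_eq_right hle, max_eq_left (by linarith)]; ring
    · rw [max_eq_left hle, max_eq_right (by linarith)]; ring
  have hLdecomp : L f = L fp - L fm := by
    have hsum : f + fm = fp := by
      ext x
      simp only [Pi.add_apply]
      linarith [hdecomp x]
    have := hLadd f hfF fm hfmF
    rw [hsum] at this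
    linarith
  have hlintp : ∫⁻ x, ENNReal.ofReal (fp x) ∂μ = ENNReal.ofReal (L fp) :=
    hD.lintegral_ofReal hlecara hmf hfpF hfpn
  have hlintm : ∫⁻ x, ENNReal.ofReal (fm x) ∂μ = ENNReal.ofReal (L fm) :=
    hD.lintegral_ofReal hlecara hmf hfmF hfmn
  have hintp : Integrable fp μ := by
    refine ⟨(hmf fp hfpF).aestronglyMeasurable, ?_⟩
    rw [hasFiniteIntegral_iff_ofReal (Eventually.of_forall hfpn), hlintp]
    exact ENNReal.ofReal_lt_top
  have hintm : Integrable fm μ := by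
    refine ⟨(hmf fm hfmF).aestronglyMeasurable, ?_⟩
    rw [hasFiniteIntegral_iff_ofReal (Eventually.of_forall hfmn), hlintm]
    exact ENNReal.ofReal_lt_top
  have hip : ∫ x, fp x ∂μ = L fp := by
    rw [integral_eq_lintegral_of_nonneg_ae (Eventually.of_forall hfpn)
      (hmf fp hfpF).aestronglyMeasurable, hlintp,
      ENNReal.toReal_ofReal (hD.Lnn hfpF hfpn)]
  have him : ∫ x, fm x ∂μ = L fm := by
    rw [integral_eq_lintegral_of_nonneg_ae (Eventually.of_forall hfmn)
      (hmf fm hfmF).aestronglyMeasurable, hlintm,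
      ENNReal.toReal_ofReal (hD.Lnn hfmF hfmn)]
  calc L f = L fp - L fm := hLdecomp
    _ = (∫ x, fp x ∂μ) - ∫ x, fm x ∂μ := by rw [hip, him]
    _ = ∫ x, (fp x - fm x) ∂μ := (integral_sub hintp hintm).symm
    _ = ∫ x, f x ∂μ := by
        congr 1
        ext x
        exact (hdecomp x).symm
end
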